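/- arXiv:1711.05110 — 8 statements merged into one kernel-verified Lean document; each statement's English description precedes it below -/
import Mathlib

section
/- Let λ be a nonreal complex number and q(t) = (t-λ)(t-conj(λ)). Then there exists a polynomial p with real coefficients such that all coefficients of p are nonnegative with positive constant term, and all coefficients of the product p·q are nonnegative with positive constant term. -/
open Polynomial

/-- The quadratic `q(t) = (t - λ)(t - conj λ)`. -/
noncomputable def quadOf (lam : ℂ) : Polynomial ℂ :=
  (X - C lam) * (X - C (starRingEnd ℂ lam))

/-- Existence of `m` with `Re(λ^{2^m}) ≤ 0` for nonreal `λ`. -/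
lemma exists_re_nonpos (lam : ℂ) (hlam : lam.im ≠ 0) :
    ∃ m : ℕ, (lam ^ 2 ^ m).re ≤ 0 := by
  by_contra h
  push_neg at h
  have hsq : ∀ m : ℕ, lam ^ 2 ^ (m + 1) = lam ^ 2 ^ m * lam ^ 2 ^ m := by
    intro m
    rw [← pow_add]
    congr 1
    rw [pow_succ]; ring
  have key : ∀ m : ℕ, 2 ^ m * |lam.im| * (lam ^ 2 ^ m).re ≤ |(lam ^ 2 ^ m).im| * lam.re := by
    intro m
    induction m with
    | zero => simp
    | succ m ih =>
      have hR : 0 < (lam ^ 2 ^ m).re := h m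
      have hR2 : 0 < (lam ^ 2 ^ (m + 1)).re := h (m + 1)
      rw [hsq m] at hR2 ⊢
      rw [Complex.mul_re] at hR2 ⊢
      rw [Complex.mul_im]
      set R := (lam ^ 2 ^ m).re
      set I := (lam ^ 2 ^ m).im
      have habs : |R * I + I * R| = 2 * R * |I| := by
        rw [show R * I + I * R = (2 * R) * I by ring, abs_mul,
          abs_of_pos (by linarith : (0:ℝ) < 2 * R)]
      rw [habs, pow_succ]
      nlinarith [ih, abs_nonneg lam.im, abs_nonneg I, mul_nonneg (mul_nonneg (by positivity : (0:ℝ) ≤ 2^m) (abs_nonneg lam.im)) (mul_self_nonneg I), mul_le_mul_of_nonneg_left ih (by linarith : (0:ℝ) ≤ 2 * R)]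
  have hr0 : 0 < lam.re := by
    have := h 0
    simpa using this
  have hlt : ∀ m : ℕ, (2:ℝ) ^ m * |lam.im| < lam.re := by
    intro m
    have k := key m
    have hR : 0 < (lam ^ 2 ^ m).re := h m
    have hR2 : 0 < (lam ^ 2 ^ (m + 1)).re := h (m + 1)
    rw [hsq m, Complex.mul_re] at hR2
    set R := (lam ^ 2 ^ m).re
    set I := (lam ^ 2 ^ m).im
    have hIR : |I| < R := by
      nlinarith [abs_nonneg I, sq_abs I]
    have h1 : |I| * lam.re < R * lam.re := by
      exact mul_lt_mul_of_pos_right hIR hr0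
    nlinarith [k]
  have hipos : 0 < |lam.im| := abs_pos.mpr hlam
  obtain ⟨n, hn⟩ := pow_unbounded_of_one_lt (lam.re / |lam.im|) (by norm_num : (1:ℝ) < 2)
  have := hlt n
  rw [div_lt_iff₀ hipos] at hn
  linarith

/-- Telescoping identity. -/
lemma telescope (a : ℂ) (m : ℕ) :
    (∏ j ∈ Finset.range m, ((X : ℂ[X]) ^ 2 ^ j + C (a ^ 2 ^ j))) * (X - C a)
      = X ^ 2 ^ m - C (a ^ 2 ^ m) := by
  induction m with
  | zero => simp
  | succ m ih =>
    have hb : a ^ 2 ^ (m + 1) = a ^ 2 ^ m * a ^ 2 ^ m := by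
      rw [← pow_add]; congr 1; rw [pow_succ]; ring
    have hX : (X : ℂ[X]) ^ 2 ^ (m + 1) = X ^ 2 ^ m * X ^ 2 ^ m := by
      rw [← pow_add]; congr 1; rw [pow_succ]; ring
    rw [Finset.prod_range_succ, hb, hX, C_mul]
    linear_combination ((X : ℂ[X]) ^ 2 ^ m + C (a ^ 2 ^ m)) * ih

lemma coeff_nonneg_prod {ι : Type*} (s : Finset ι) (f : ι → Polynomial ℝ)
    (h : ∀ i ∈ s, ∀ n, 0 ≤ (f i).coeff n) :
    ∀ n, 0 ≤ (∏ i ∈ s, f i).coeff n := by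
  refine Finset.prod_induction f (fun q => ∀ n, 0 ≤ q.coeff n) ?_ ?_ h
  · intro a b ha hb n
    rw [Polynomial.coeff_mul]
    exact Finset.sum_nonneg fun x _ => mul_nonneg (ha _) (hb _)
  · intro n
    rw [Polynomial.coeff_one]
    split_ifs <;> norm_num

theorem stmt0 (lam : ℂ) (hlam : lam.im ≠ 0) :
    ∃ p : Polynomial ℝ,
      (∀ n, 0 ≤ p.coeff n) ∧ 0 < p.coeff 0 ∧
      (∀ n, ((p.map (algebraMap ℝ ℂ) * quadOf lam).coeff n).im = 0 ∧
            0 ≤ ((p.map (algebraMap ℝ ℂ) * quadOf lam).coeff n).re) ∧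
      0 < ((p.map (algebraMap ℝ ℂ) * quadOf lam).coeff 0).re := by
  classical
  have hne : lam ≠ 0 := fun h => hlam (by simp [h])
  obtain ⟨m, hm, hmin⟩ : ∃ m, (lam ^ 2 ^ m).re ≤ 0 ∧ ∀ j < m, 0 < (lam ^ 2 ^ j).re := by
    have hex : ∃ m, (lam ^ 2 ^ m).re ≤ 0 := exists_re_nonpos lam hlam
    refine ⟨Nat.find hex, Nat.find_spec hex, fun j hj => ?_⟩
    exact lt_of_not_ge (Nat.find_min hex hj)
  set p : Polynomial ℝ := ∏ j ∈ Finset.range m,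
      ((X : Polynomial ℝ) ^ 2 ^ (j + 1) + C (2 * (lam ^ 2 ^ j).re) * X ^ 2 ^ j
        + C (‖lam‖ ^ 2 ^ (j + 1))) with hpdef
  have habs : 0 < ‖lam‖ := norm_pos_iff.mpr hne
  have hfaccoeff : ∀ j ∈ Finset.range m, ∀ n,
      0 ≤ ((X : Polynomial ℝ) ^ 2 ^ (j + 1) + C (2 * (lam ^ 2 ^ j).re) * X ^ 2 ^ j
        + C (‖lam‖ ^ 2 ^ (j + 1))).coeff n := by
    intro j hj n
    have h1 : 0 ≤ 2 * (lam ^ 2 ^ j).re := by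
      have := hmin j (Finset.mem_range.mp hj); linarith
    have h2 : 0 ≤ ‖lam‖ ^ 2 ^ (j + 1) := by positivity
    simp only [coeff_add, coeff_C_mul, coeff_X_pow, coeff_C]
    split_ifs <;> simp <;> nlinarith
  have hpnn : ∀ n, 0 ≤ p.coeff n := coeff_nonneg_prod _ _ hfaccoeff
  have hp0 : 0 < p.coeff 0 := by
    rw [hpdef, Polynomial.coeff_zero_eq_eval_zero, Polynomial.eval_prod]
    refine Finset.prod_pos fun j hj => ?_
    have := hmin j (Finset.mem_range.mp hj)
    simp only [eval_add, eval_mul, eval_pow, eval_X, eval_C,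
      zero_pow (by positivity : 2 ^ (j + 1) ≠ 0), zero_pow (by positivity : 2 ^ j ≠ 0)]
    positivity
  -- algebraic identity for the product
  have hsq : ∀ (a : ℂ) (k : ℕ), a ^ 2 ^ (k + 1) = a ^ 2 ^ k * a ^ 2 ^ k := by
    intro a k; rw [← pow_add]; congr 1; rw [pow_succ]; ring
  have hXsq : ∀ k : ℕ, (X : ℂ[X]) ^ 2 ^ (k + 1) = X ^ 2 ^ k * X ^ 2 ^ k := by
    intro k; rw [← pow_add]; congr 1; rw [pow_succ]; ring
  have hfacmap : ∀ j : ℕ,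
      Polynomial.map (algebraMap ℝ ℂ)
        ((X : Polynomial ℝ) ^ 2 ^ (j + 1) + C (2 * (lam ^ 2 ^ j).re) * X ^ 2 ^ j
          + C (‖lam‖ ^ 2 ^ (j + 1)))
      = ((X : ℂ[X]) ^ 2 ^ j + C (lam ^ 2 ^ j))
        * ((X : ℂ[X]) ^ 2 ^ j + C ((starRingEnd ℂ lam) ^ 2 ^ j)) := by
    intro j
    rw [Polynomial.map_add, Polynomial.map_add, Polynomial.map_mul, Polynomial.map_pow,
      Polynomial.map_pow, Polynomial.map_X, Polynomial.map_C, Polynomial.map_C]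
    have e1 : (algebraMap ℝ ℂ) (2 * (lam ^ 2 ^ j).re)
        = lam ^ 2 ^ j + (starRingEnd ℂ lam) ^ 2 ^ j := by
      rw [Complex.coe_algebraMap, ← map_pow (starRingEnd ℂ), Complex.add_conj]
      all_goals push_cast
      all_goals ring
    have hnsq : Complex.normSq (lam ^ 2 ^ j) = ‖lam‖ ^ 2 ^ (j + 1) := by
      rw [Complex.normSq_eq_norm_sq, norm_pow, ← pow_mul, ← pow_succ]
    have e2 : (algebraMap ℝ ℂ) (‖lam‖ ^ 2 ^ (j + 1))
        = lam ^ 2 ^ j * (starRingEnd ℂ lam) ^ 2 ^ j := by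
      rw [Complex.coe_algebraMap, ← map_pow (starRingEnd ℂ), Complex.mul_conj, ← hnsq]
    rw [e1, e2, hXsq j, C_add, C_mul]
    ring
  have hmap : p.map (algebraMap ℝ ℂ) * quadOf lam
      = ((X : ℂ[X]) ^ 2 ^ m - C (lam ^ 2 ^ m))
        * ((X : ℂ[X]) ^ 2 ^ m - C ((starRingEnd ℂ lam) ^ 2 ^ m)) := by
    rw [hpdef, Polynomial.map_prod, quadOf]
    simp_rw [hfacmap]
    rw [Finset.prod_mul_distrib]
    rw [show (∏ j ∈ Finset.range m, ((X : ℂ[X]) ^ 2 ^ j + C (lam ^ 2 ^ j)))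
          * (∏ j ∈ Finset.range m, ((X : ℂ[X]) ^ 2 ^ j + C ((starRingEnd ℂ lam) ^ 2 ^ j)))
          * ((X - C lam) * (X - C (starRingEnd ℂ lam)))
        = ((∏ j ∈ Finset.range m, ((X : ℂ[X]) ^ 2 ^ j + C (lam ^ 2 ^ j))) * (X - C lam))
          * ((∏ j ∈ Finset.range m, ((X : ℂ[X]) ^ 2 ^ j + C ((starRingEnd ℂ lam) ^ 2 ^ j)))
            * (X - C (starRingEnd ℂ lam))) from by ring]
    rw [telescope lam m, telescope (starRingEnd ℂ lam) m]
  -- the product is the image of a real trinomial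
  set P : Polynomial ℝ := (X : Polynomial ℝ) ^ 2 ^ (m + 1)
      + C (-(2 * (lam ^ 2 ^ m).re)) * X ^ 2 ^ m + C (Complex.normSq (lam ^ 2 ^ m)) with hPdef
  have hmapP : p.map (algebraMap ℝ ℂ) * quadOf lam = P.map (algebraMap ℝ ℂ) := by
    rw [hmap, hPdef]
    rw [Polynomial.map_add, Polynomial.map_add, Polynomial.map_mul, Polynomial.map_pow,
      Polynomial.map_pow, Polynomial.map_X, Polynomial.map_C, Polynomial.map_C]
    have e1 : (algebraMap ℝ ℂ) (-(2 * (lam ^ 2 ^ m).re))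
        = -(lam ^ 2 ^ m + (starRingEnd ℂ lam) ^ 2 ^ m) := by
      rw [Complex.coe_algebraMap, ← map_pow (starRingEnd ℂ), Complex.add_conj]
      all_goals push_cast
      all_goals ring
    have e2 : (algebraMap ℝ ℂ) (Complex.normSq (lam ^ 2 ^ m))
        = lam ^ 2 ^ m * (starRingEnd ℂ lam) ^ 2 ^ m := by
      rw [Complex.coe_algebraMap, ← map_pow (starRingEnd ℂ), Complex.mul_conj]
    rw [e1, e2, hXsq m, C_neg, C_add, C_mul]
    ring
  have hPnn : ∀ n, 0 ≤ P.coeff n := by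
    intro n
    have h1 : 0 ≤ -(2 * (lam ^ 2 ^ m).re) := by linarith
    have h2 : 0 ≤ Complex.normSq (lam ^ 2 ^ m) := Complex.normSq_nonneg _
    rw [hPdef]
    simp only [coeff_add, coeff_C_mul, coeff_X_pow, coeff_C]
    split_ifs <;> simp <;>
      nlinarith [h1, pow_nonneg (Complex.normSq_nonneg lam) (2 ^ m)]
  have hP0 : 0 < P.coeff 0 := by
    rw [hPdef]
    simp only [coeff_add, coeff_C_mul, coeff_X_pow, coeff_C]
    rw [if_neg (Ne.symm (by positivity : (2:ℕ) ^ (m + 1) ≠ 0)),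
      if_neg (Ne.symm (by positivity : (2:ℕ) ^ m ≠ 0))]
    simpa using Complex.normSq_pos.mpr (pow_ne_zero _ hne)
  refine ⟨p, hpnn, hp0, ?_, ?_⟩
  · intro n
    rw [hmapP, Polynomial.coeff_map]
    constructor
    · simp
    · simpa using hPnn n
  · rw [hmapP, Polynomial.coeff_map]
    simpa using hP0
end

section
/- If q is a polynomial with real coefficients having no real roots and q(0) > 0, then there exists a polynomial p with real coefficients such that p ≻ 0 and p·q ≻ 0. -/
open Polynomial

def NonnegP (p : ℝ[X]) : Prop := ∀ n, 0 ≤ p.coeff n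

lemma nonnegP_mul {p q : ℝ[X]} (hp : NonnegP p) (hq : NonnegP q) : NonnegP (p * q) := by
  intro n
  rw [coeff_mul]
  exact Finset.sum_nonneg fun x _ => mul_nonneg (hp _) (hq _)

lemma nonnegP_expand {p : ℝ[X]} (hp : NonnegP p) : NonnegP (expand ℝ 2 p) := by
  intro n
  rw [coeff_expand (by norm_num)]
  split <;> simp [hp _]

lemma nonnegP_quad {b c : ℝ} (hb : 0 ≤ b) (hc : 0 ≤ c) :
    NonnegP (X ^ 2 + C b * X + C c) := by
  intro n
  match n with
  | 0 => simp [coeff_one, hc]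
  | 1 => simp [coeff_X, hb]
  | 2 => simp [coeff_X_pow, coeff_C]
  | (m+3) => simp [coeff_X_pow, coeff_C, coeff_X]

lemma quad_flip_identity (b c : ℝ) :
    (X ^ 2 + C b * X + C c) * (X ^ 2 + C (-b) * X + C c)
      = expand ℝ 2 (X ^ 2 + C (2 * c - b ^ 2) * X + C (c ^ 2)) := by
  simp only [map_add, map_mul, map_pow, expand_X, expand_C, map_sub, map_ofNat, map_neg]
  ring

lemma quad_fuel : ∀ N : ℕ, ∀ b c : ℝ, 0 < c → b ^ 2 < 4 * c →
    4 * c ≤ 2 ^ N * (4 * c - b ^ 2) →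
    ∃ p : ℝ[X], NonnegP p ∧ 0 < p.coeff 0 ∧ NonnegP (p * (X ^ 2 + C b * X + C c)) := by
  intro N
  induction N with
  | zero =>
    intro b c hc hd hN
    have hb : b = 0 := by nlinarith
    refine ⟨1, fun n => by simp [coeff_one]; split <;> norm_num, by simp, ?_⟩
    rw [one_mul]
    exact nonnegP_quad (by rw [hb]) hc.le
  | succ N ih =>
    intro b c hc hd hN
    by_cases hb : 0 ≤ b
    · exact ⟨1, fun n => by simp [coeff_one]; split <;> norm_num, by simp,
        by rw [one_mul]; exact nonnegP_quad hb hc.le⟩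
    push_neg at hb
    by_cases h2 : 0 ≤ 2 * c - b ^ 2
    · -- one flip suffices
      refine ⟨X ^ 2 + C (-b) * X + C c, nonnegP_quad (by linarith) hc.le, ?_, ?_⟩
      · simp [coeff_one, coeff_X, coeff_X_pow, coeff_C]; exact hc
      · intro n
        rw [mul_comm, quad_flip_identity]
        exact nonnegP_expand (nonnegP_quad h2 (by positivity)) n
    push_neg at h2
    -- recurse on (2c - b², c²)
    set b' := 2 * c - b ^ 2 with hb'
    set c' := c ^ 2 with hc'
    have hc'pos : 0 < c' := by positivity
    have hd' : b' ^ 2 < 4 * c' := by nlinarith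
    have hN' : 4 * c' ≤ 2 ^ N * (4 * c' - b' ^ 2) := by
      have h2c : 2 * c ≤ b ^ 2 := by linarith
      have hpos : (0:ℝ) ≤ 4 * c - b ^ 2 := by linarith
      calc 4 * c' = c * (4 * c) := by rw [hc']; ring
        _ ≤ c * (2 ^ (N + 1) * (4 * c - b ^ 2)) := mul_le_mul_of_nonneg_left hN hc.le
        _ = 2 ^ N * (2 * c * (4 * c - b ^ 2)) := by rw [pow_succ]; ring
        _ ≤ 2 ^ N * (b ^ 2 * (4 * c - b ^ 2)) := by
            apply mul_le_mul_of_nonneg_left _ (by positivity)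
            exact mul_le_mul_of_nonneg_right h2c hpos
        _ = 2 ^ N * (4 * c' - b' ^ 2) := by rw [hb', hc']; ring
    obtain ⟨p', hp1, hp2, hp3⟩ := ih b' c' hc'pos hd' hN'
    refine ⟨expand ℝ 2 p' * (X ^ 2 + C (-b) * X + C c),
      nonnegP_mul (nonnegP_expand hp1) (nonnegP_quad (by linarith) hc.le), ?_, ?_⟩
    · rw [mul_coeff_zero]
      have : (expand ℝ 2 p').coeff 0 = p'.coeff 0 := by
        rw [coeff_expand (by norm_num)]; norm_num
      rw [this]
      have : (X ^ 2 + C (-b) * X + C c).coeff 0 = c := by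
        simp [coeff_one, coeff_X, coeff_X_pow, coeff_C]
      rw [this]; positivity
    · have key : expand ℝ 2 p' * (X ^ 2 + C (-b) * X + C c) * (X ^ 2 + C b * X + C c)
          = expand ℝ 2 (p' * (X ^ 2 + C b' * X + C c')) := by
        rw [map_mul, mul_assoc, mul_comm (X ^ 2 + C (-b) * X + C c), quad_flip_identity]
      rw [key]
      exact nonnegP_expand hp3

lemma quad_sol (b c : ℝ) (hc : 0 < c) (hd : b ^ 2 < 4 * c) :
    ∃ p : ℝ[X], NonnegP p ∧ 0 < p.coeff 0 ∧ NonnegP (p * (X ^ 2 + C b * X + C c)) := by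
  obtain ⟨N, hN⟩ := pow_unbounded_of_one_lt (4 * c / (4 * c - b ^ 2)) (show (1:ℝ) < 2 by norm_num)
  refine quad_fuel N b c hc hd ?_
  have hpos : (0:ℝ) < 4 * c - b ^ 2 := by linarith
  rw [div_lt_iff₀ hpos] at hN
  linarith

lemma exists_quad_dvd (q : ℝ[X]) (hroots : ∀ x : ℝ, q.eval x ≠ 0) (hdeg : q.natDegree ≠ 0) :
    ∃ b c : ℝ, 0 < c ∧ b ^ 2 < 4 * c ∧ (X ^ 2 + C b * X + C c) ∣ q := by
  have hq0 : q ≠ 0 := fun h => hroots 0 (by simp [h])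
  have hdpos : 0 < q.degree := natDegree_pos_iff_degree_pos.mp (Nat.pos_of_ne_zero hdeg)
  have hmapdeg : (q.map (algebraMap ℝ ℂ)).degree = q.degree :=
    degree_map_eq_of_injective (algebraMap ℝ ℂ).injective q
  obtain ⟨z, hz⟩ := Complex.exists_root (f := q.map (algebraMap ℝ ℂ)) (by rw [hmapdeg]; exact hdpos)
  have him : z.im ≠ 0 := by
    intro h0
    apply hroots z.re
    apply (algebraMap ℝ ℂ).injective
    rw [map_zero, ← eval₂_at_apply]
    have hre : (algebraMap ℝ ℂ) z.re = z := by
      apply Complex.ext <;> simp [h0]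
    rw [hre, ← eval_map]
    exact hz
  have hzc : IsRoot (q.map (algebraMap ℝ ℂ)) ((starRingEnd ℂ) z) := by
    have := Polynomial.aeval_conj q z
    rw [aeval_def, aeval_def, ← eval_map, ← eval_map] at this
    rw [IsRoot, this, hz, map_zero]
  refine ⟨-(2 * z.re), Complex.normSq z, ?_, ?_, ?_⟩
  · have : z ≠ 0 := fun h => him (by simp [h])
    exact Complex.normSq_pos.mpr this
  · rw [Complex.normSq_apply]
    nlinarith [mul_self_pos.mpr him]
  · rw [← map_dvd_map' (algebraMap ℝ ℂ)]
    have hfactor : (X ^ 2 + C (-(2 * z.re)) * X + C (Complex.normSq z)).map (algebraMap ℝ ℂ)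
        = (X - C z) * (X - C ((starRingEnd ℂ) z)) := by
      have e1 : (algebraMap ℝ ℂ) (-(2 * z.re)) = -(z + (starRingEnd ℂ) z) := by
        rw [Complex.add_conj]
        simp only [Complex.coe_algebraMap]
        push_cast
        ring
      have e2 : (algebraMap ℝ ℂ) (Complex.normSq z) = z * (starRingEnd ℂ) z := by
        rw [Complex.mul_conj]; rfl
      rw [Polynomial.map_add, Polynomial.map_add, Polynomial.map_mul, Polynomial.map_pow,
        Polynomial.map_X, Polynomial.map_C, Polynomial.map_C, e1, e2]
      simp only [map_neg, map_add, map_mul]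
      ring
    rw [hfactor]
    obtain ⟨g, hg⟩ := (dvd_iff_isRoot).mpr hz
    have hzg : IsRoot g ((starRingEnd ℂ) z) := by
      have hthis := hzc
      rw [hg, IsRoot, eval_mul] at hthis
      rcases mul_eq_zero.mp hthis with h | h
      · exfalso
        rw [eval_sub, eval_X, eval_C, sub_eq_zero] at h
        exact him (Complex.conj_eq_iff_im.mp h)
      · exact h
    obtain ⟨h2, hh2⟩ := (dvd_iff_isRoot).mpr hzg
    exact ⟨h2, by rw [hg, hh2]; ring⟩

lemma quad_eval_pos (b c x : ℝ) (hd : b ^ 2 < 4 * c) :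
    0 < (X ^ 2 + C b * X + C c).eval x := by
  simp only [eval_add, eval_mul, eval_pow, eval_X, eval_C]
  nlinarith [sq_nonneg (2 * x + b)]

lemma quad_monic (b c : ℝ) : (X ^ 2 + C b * X + C c : ℝ[X]).Monic := by
  rw [add_assoc]
  apply monic_X_pow_add
  apply lt_of_le_of_lt (degree_linear_le)
  norm_num

lemma quad_natDegree (b c : ℝ) : (X ^ 2 + C b * X + C c : ℝ[X]).natDegree = 2 := by
  have : (X ^ 2 + C b * X + C c : ℝ[X]) = C 1 * X ^ 2 + C b * X + C c := by rw [C_1, one_mul]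
  rw [this]
  exact natDegree_quadratic one_ne_zero

lemma main_aux : ∀ n : ℕ, ∀ q : ℝ[X], q.natDegree ≤ n → (∀ x : ℝ, q.eval x ≠ 0) →
    0 < q.eval 0 → ∃ p : ℝ[X], NonnegP p ∧ 0 < p.coeff 0 ∧ NonnegP (p * q) := by
  have const_case : ∀ q : ℝ[X], q.natDegree = 0 → 0 < q.eval 0 →
      ∃ p : ℝ[X], NonnegP p ∧ 0 < p.coeff 0 ∧ NonnegP (p * q) := by
    intro q h0 hpos
    have hq : q = C (q.coeff 0) := eq_C_of_natDegree_le_zero (le_of_eq h0)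
    refine ⟨1, fun n => by simp [coeff_one]; split <;> norm_num, by simp, ?_⟩
    intro n
    rw [one_mul, hq, coeff_C]
    rw [coeff_zero_eq_eval_zero]
    split <;> simp [le_of_lt hpos]
  intro n
  induction n with
  | zero =>
    intro q hdeg hroots hpos
    exact const_case q (Nat.le_zero.mp hdeg) hpos
  | succ n ih =>
    intro q hdeg hroots hpos
    by_cases h0 : q.natDegree = 0
    · exact const_case q h0 hpos
    obtain ⟨b, c, hc, hd, hdvd⟩ := exists_quad_dvd q hroots h0
    obtain ⟨q', hq'⟩ := hdvd
    set quad : ℝ[X] := X ^ 2 + C b * X + C c with hquad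
    have hq'0 : q' ≠ 0 := by
      intro h
      exact hroots 0 (by rw [hq', h, mul_zero, eval_zero])
    have heval : ∀ x : ℝ, q.eval x = quad.eval x * q'.eval x := by
      intro x; rw [hq', eval_mul]
    have hq'roots : ∀ x : ℝ, q'.eval x ≠ 0 := by
      intro x h
      exact hroots x (by rw [heval x, h, mul_zero])
    have hq'pos : 0 < q'.eval 0 := by
      have h1 := heval 0
      have h2 := quad_eval_pos b c 0 hd
      by_contra h
      push_neg at h
      nlinarith
    have hdeg' : q'.natDegree ≤ n := by
      have h1 : q.natDegree = 2 + q'.natDegree := by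
        rw [hq', natDegree_mul (quad_monic b c).ne_zero hq'0, quad_natDegree]
      omega
    obtain ⟨p', hp'1, hp'2, hp'3⟩ := ih q' hdeg' hq'roots hq'pos
    obtain ⟨pq, hpq1, hpq2, hpq3⟩ := quad_sol b c hc hd
    refine ⟨pq * p', nonnegP_mul hpq1 hp'1, ?_, ?_⟩
    · rw [mul_coeff_zero]; positivity
    · have : pq * p' * q = (pq * quad) * (p' * q') := by rw [hq']; ring
      rw [this]
      exact nonnegP_mul hpq3 hp'3

theorem stmt1 (q : Polynomial ℝ) (hroots : ∀ x : ℝ, q.eval x ≠ 0)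
    (hq0 : 0 < q.eval 0) :
    ∃ p : Polynomial ℝ,
      (∀ n, 0 ≤ p.coeff n) ∧ 0 < p.coeff 0 ∧
      (∀ n, 0 ≤ (p * q).coeff n) ∧ 0 < (p * q).coeff 0 := by
  obtain ⟨p, h1, h2, h3⟩ := main_aux q.natDegree q le_rfl hroots hq0
  refine ⟨p, h1, h2, h3, ?_⟩
  rw [mul_coeff_zero, q.coeff_zero_eq_eval_zero]
  exact mul_pos h2 hq0
end

section
/- If q is a polynomial with real coefficients such that q(t) > 0 for every t in [0,1], then there exists a function u analytic on a neighborhood of the closed unit disc such that all Taylor coefficients of u at 0 are nonnegative with u(0) > 0, and all Taylor coefficients of u·q at 0 are nonnegative with (uq)(0) > 0. -/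
open Polynomial Finset


lemma choose_step (a N : ℕ) :
    (a + 1 + N) * Nat.choose (a + N) N = (a + 1) * Nat.choose (a + 1 + N) N := by
  have h1 := Nat.add_one_mul_choose_eq (a + N) N
  have h2 := Nat.choose_succ_right_eq (a + 1 + N) N
  have h3 : a + 1 + N - N = a + 1 := by omega
  rw [h3] at h2
  have h4 : a + N + 1 = a + 1 + N := by omega
  rw [h4] at h1
  rw [h1, h2]; ring

lemma step_lower (c e : ℝ) (k : ℕ) (hc0 : 0 ≤ c) (hc1 : c ≤ 1) (he0 : 0 ≤ e) :
    c^(k+1) - ((k:ℝ)+1)*e ≤ (c^k - (k:ℝ)*e)*(c - e) := by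
  have h9 : c^k ≤ 1 := pow_le_one₀ hc0 hc1
  have hk0 : (0:ℝ) ≤ (k:ℝ) := Nat.cast_nonneg k
  rw [pow_succ]
  nlinarith [mul_nonneg hk0 (mul_nonneg he0 he0), mul_nonneg he0 (sub_nonneg.mpr h9),
    mul_nonneg (mul_nonneg hk0 he0) (sub_nonneg.mpr hc1)]

lemma ratio_bounds (d N₀ n N : ℕ) (hN : N = d + 1 + N₀) (c e Cn : ℝ)
    (hc : c = (n:ℝ)/((n:ℝ)+N)) (he : e = (d:ℝ)/((N₀:ℝ)+2))
    (hCn : Cn = (Nat.choose (n+N) N : ℝ)) :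
    ∀ k, k ≤ n → k ≤ d →
      (c^k - k*e) * Cn ≤ (Nat.choose (n - k + N) N : ℝ) ∧
      (Nat.choose (n - k + N) N : ℝ) ≤ c^k * Cn := by
  have hNpos : (0:ℝ) < (N:ℝ) := by exact_mod_cast (show 0 < N by omega)
  have hn0 : (0:ℝ) ≤ (n:ℝ) := Nat.cast_nonneg n
  have hc0 : 0 ≤ c := by rw [hc]; positivity
  have hc1 : c ≤ 1 := by rw [hc, div_le_one (by linarith)]; linarith
  have he0 : 0 ≤ e := by rw [he]; positivity
  have hCn0 : (0:ℝ) < Cn := by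
    have := Nat.choose_pos (Nat.le_add_left N n)
    rw [hCn]; exact_mod_cast this
  intro k
  induction k with
  | zero =>
    intro _ _
    simp only [Nat.sub_zero, pow_zero, Nat.cast_zero, zero_mul, sub_zero, one_mul]
    exact ⟨le_of_eq hCn, le_of_eq hCn.symm⟩
  | succ k ih =>
    intro hk1 hd1
    have hkn : k ≤ n := by omega
    have hkd : k ≤ d := by omega
    obtain ⟨ihl, ihu⟩ := ih hkn hkd
    obtain ⟨a, ha⟩ : ∃ a, n - (k+1) = a := ⟨n - (k+1), rfl⟩
    have h2 : n - (k+1) + N = a + N := by omega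
    have h3 : n - k + N = a + 1 + N := by omega
    have hden : (0:ℝ) < (a:ℝ)+1+N := by positivity
    have hid : ((a:ℝ) + 1 + N) * (Nat.choose (a + N) N : ℝ)
        = ((a:ℝ)+1) * (Nat.choose (a+1+N) N : ℝ) := by exact_mod_cast choose_step a N
    have hW0 : (0:ℝ) ≤ (Nat.choose (a+1+N) N : ℝ) := by positivity
    have hWk1 : (Nat.choose (n - (k+1) + N) N : ℝ)
        = (Nat.choose (a+1+N) N : ℝ) * (((a:ℝ)+1) / ((a:ℝ)+1+N)) := by
      rw [h2, mul_div_assoc', eq_div_iff hden.ne']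
      linear_combination hid
    have hW' : (Nat.choose (n - k + N) N : ℝ) = (Nat.choose (a+1+N) N : ℝ) := by rw [h3]
    rw [hW'] at ihl ihu
    have hφ0 : (0:ℝ) ≤ ((a:ℝ)+1) / ((a:ℝ)+1+N) := by positivity
    have hnak : (n:ℝ) = (a:ℝ) + 1 + (k:ℝ) := by
      have : n = a + 1 + k := by omega
      exact_mod_cast this
    have hk0 : (0:ℝ) ≤ (k:ℝ) := Nat.cast_nonneg k
    have ha0 : (0:ℝ) ≤ (a:ℝ) := Nat.cast_nonneg a
    have hφc : ((a:ℝ)+1) / ((a:ℝ)+1+N) ≤ c := by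
      rw [hc, div_le_div_iff₀ hden (by linarith)]
      nlinarith
    have hφe : c - e ≤ ((a:ℝ)+1) / ((a:ℝ)+1+N) := by
      have hkd' : (k:ℝ) ≤ (d:ℝ) := by exact_mod_cast hkd
      have hsub : c - ((a:ℝ)+1) / ((a:ℝ)+1+N) ≤ e := by
        have hcφ : c - ((a:ℝ)+1) / ((a:ℝ)+1+N)
            = (k:ℝ)*(N:ℝ) / (((n:ℝ)+N)*((a:ℝ)+1+N)) := by
          rw [hc, hnak]
          field_simp
          ring
        rw [hcφ, he, div_le_div_iff₀ (by positivity) (by positivity)]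
        have hN02 : ((N₀:ℝ)+2) ≤ (a:ℝ)+1+N := by
          have hNd : (N:ℝ) = (d:ℝ)+1+(N₀:ℝ) := by rw [hN]; push_cast; ring
          have hd0 : (0:ℝ) ≤ (d:ℝ) := Nat.cast_nonneg d
          linarith
        have hNn : (N:ℝ) ≤ (n:ℝ)+N := by linarith
        have hd0 : (0:ℝ) ≤ (d:ℝ) := Nat.cast_nonneg d
        have hN020 : (0:ℝ) < (N₀:ℝ)+2 := by positivity
        have hstep1 : (N:ℝ)*((N₀:ℝ)+2) ≤ ((n:ℝ)+N)*((a:ℝ)+1+N) :=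
          mul_le_mul hNn hN02 hN020.le (by linarith)
        have hstep2 : (k:ℝ)*((N:ℝ)*((N₀:ℝ)+2)) ≤ (d:ℝ)*(((n:ℝ)+N)*((a:ℝ)+1+N)) :=
          mul_le_mul hkd' hstep1 (by positivity) hd0
        linarith [hstep2]
      linarith
    constructor
    · by_cases hcase : c^(k+1) - ((k:ℝ)+1)*e ≤ 0
      · have hle : (c^(k+1) - (((k+1):ℕ):ℝ)*e) * Cn ≤ 0 := by
          push_cast
          exact mul_nonpos_of_nonpos_of_nonneg hcase hCn0.le
        calc (c^(k+1) - (((k+1):ℕ):ℝ)*e) * Cn ≤ 0 := hle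
          _ ≤ (Nat.choose (n - (k+1) + N) N : ℝ) := by positivity
      · push_neg at hcase
        have hck : c^(k+1) ≤ c^k := pow_le_pow_of_le_one hc0 hc1 (by omega)
        have hcc : c^(k+1) ≤ c := by
          calc c^(k+1) ≤ c^1 := pow_le_pow_of_le_one hc0 hc1 (by omega)
            _ = c := pow_one c
        have hke : 0 ≤ (k:ℝ)*e := mul_nonneg hk0 he0
        have h6 : 0 ≤ c^k - k*e := by linarith only [hck, hcase, he0]
        have h7 : 0 ≤ c - e := by linarith only [hcc, hcase, hke]
        have h8 : ((c^k - k*e)*Cn)*(c - e)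
            ≤ (Nat.choose (a+1+N) N : ℝ) * (((a:ℝ)+1) / ((a:ℝ)+1+N)) :=
          mul_le_mul ihl hφe h7 hW0
        have hexp := step_lower c e k hc0 hc1 he0
        rw [hWk1]
        push_cast
        calc (c^(k+1) - ((k:ℝ)+1)*e) * Cn ≤ ((c^k - (k:ℝ)*e)*(c-e)) * Cn :=
              mul_le_mul_of_nonneg_right hexp hCn0.le
          _ = ((c^k - (k:ℝ)*e)*Cn)*(c-e) := by ring
          _ ≤ (Nat.choose (a+1+N) N : ℝ) * (((a:ℝ)+1) / ((a:ℝ)+1+N)) := h8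
    · rw [hWk1]
      calc (Nat.choose (a+1+N) N : ℝ) * (((a:ℝ)+1) / ((a:ℝ)+1+N))
          ≤ (c^k * Cn) * c := mul_le_mul ihu hφc hφ0 (by positivity)
        _ = c^(k+1) * Cn := by ring


lemma summ_lemma (ρ : ℝ) (hρ1 : 1 < ρ) (N : ℕ) :
    Summable (fun n : ℕ =>
      |(Nat.choose (n + N) N : ℝ) / ρ ^ n| * ((1+ρ)/2) ^ n) := by
  have hρ0 : (0:ℝ) < ρ := by linarith
  set R : ℝ := (1+ρ)/2 with hR
  set r : ℝ := R / ρ with hr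
  have hr0 : 0 < r := by positivity
  have hr1 : r < 1 := by
    rw [hr, div_lt_one hρ0]; rw [hR]; linarith
  have hs : Summable (fun n : ℕ => (n:ℝ)^N * r^n) :=
    summable_pow_mul_geometric_of_norm_lt_one N
      (by rw [Real.norm_eq_abs, abs_of_pos hr0]; exact hr1)
  have hs2 : Summable (fun n : ℕ => ((n+1:ℕ):ℝ)^N * r^(n+1)) := by
    exact (summable_nat_add_iff (f := fun n : ℕ => (n:ℝ)^N * r^n) 1).mpr hs
  have hs3 := hs2.mul_left (((N:ℝ)+1)^N / r)
  apply Summable.of_nonneg_of_le (fun n => by positivity) _ hs3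
  intro n
  have h1 : |(Nat.choose (n + N) N : ℝ) / ρ ^ n| = (Nat.choose (n + N) N : ℝ) / ρ ^ n :=
    abs_of_nonneg (by positivity)
  rw [h1]
  have h2 : (Nat.choose (n + N) N : ℝ) ≤ ((N:ℝ)+1)^N * ((n:ℝ)+1)^N := by
    calc (Nat.choose (n + N) N : ℝ) ≤ ((n + N : ℕ) ^ N : ℕ) := by
          exact_mod_cast Nat.choose_le_pow (n+N) N
    _ ≤ (((N+1) * (n+1) : ℕ) ^ N : ℕ) := by
          exact_mod_cast Nat.pow_le_pow_left (by nlinarith) N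
    _ = ((N:ℝ)+1)^N * ((n:ℝ)+1)^N := by push_cast; rw [mul_pow]
  have h3 : (Nat.choose (n + N) N : ℝ) / ρ ^ n * R ^ n = (Nat.choose (n + N) N : ℝ) * r ^ n := by
    rw [hr, hR, div_pow ((1+ρ)/2) ρ n]
    ring
  rw [h3]
  have h4 : ((N:ℝ)+1)^N / r * (((n+1:ℕ):ℝ)^N * r^(n+1)) = ((N:ℝ)+1)^N * ((n:ℝ)+1)^N * r^n := by
    push_cast; field_simp; ring
  rw [h4]
  exact mul_le_mul_of_nonneg_right h2 (by positivity)

lemma main_pos (q : Polynomial ℝ) (ρ m A : ℝ) (N₀ : ℕ)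
    (hρ1 : 1 < ρ) (hm0 : 0 < m)
    (hmle : ∀ x ∈ Set.Icc (0:ℝ) ρ, m ≤ q.eval x)
    (hA : A = ∑ k ∈ Finset.range (q.natDegree+1), |q.coeff k| * ρ ^ k)
    (heA : ((q.natDegree:ℝ)+1) * ((q.natDegree:ℝ)/((N₀:ℝ)+2)) * A ≤ m)
    (n : ℕ) :
    0 ≤ ∑ j ∈ Finset.range (n + 1),
      ((Nat.choose (j + (q.natDegree+1+N₀)) (q.natDegree+1+N₀) : ℝ) / ρ ^ j) * q.coeff (n - j) := by
  have hρ0 : (0:ℝ) < ρ := by linarith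
  obtain ⟨d, hd⟩ : ∃ d, q.natDegree = d := ⟨_, rfl⟩
  rw [hd] at hA heA ⊢
  obtain ⟨N, hNd⟩ : ∃ N, N = d + 1 + N₀ := ⟨_, rfl⟩
  rw [show d + 1 + N₀ = N from hNd.symm]
  have hNpos : (0:ℝ) < (N:ℝ) := by exact_mod_cast (show 0 < N by omega)
  have hn0 : (0:ℝ) ≤ (n:ℝ) := Nat.cast_nonneg n
  obtain ⟨c, hc⟩ : ∃ c : ℝ, c = (n:ℝ)/((n:ℝ)+N) := ⟨_, rfl⟩
  obtain ⟨e, he⟩ : ∃ e : ℝ, e = (d:ℝ)/((N₀:ℝ)+2) := ⟨_, rfl⟩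
  obtain ⟨Cn, hCn⟩ : ∃ Cn : ℝ, Cn = (Nat.choose (n+N) N : ℝ) := ⟨_, rfl⟩
  have hRB := ratio_bounds d N₀ n N hNd c e Cn hc he hCn
  have hc0 : 0 ≤ c := by rw [hc]; positivity
  have hc1 : c ≤ 1 := by rw [hc, div_le_one (by linarith)]; linarith
  have he0 : 0 ≤ e := by rw [he]; positivity
  have hCn0 : (0:ℝ) < Cn := by
    have := Nat.choose_pos (Nat.le_add_left N n)
    rw [hCn]; exact_mod_cast this
  obtain ⟨K, hK⟩ : ∃ K, max n d = K := ⟨_, rfl⟩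
  have hnK : n ≤ K := by omega
  have hdK : d ≤ K := by omega
  obtain ⟨P, hP⟩ : ∃ P : ℝ, P = Cn / ρ^n := ⟨_, rfl⟩
  have hP0 : 0 ≤ P := by rw [hP]; positivity
  obtain ⟨F, hF⟩ : ∃ F : ℕ → ℝ, F = fun k =>
      if k ≤ n then ((Nat.choose (n - k + N) N : ℝ) / ρ ^ (n - k)) * q.coeff k else 0 :=
    ⟨_, rfl⟩
  -- Step A : rewrite the sum
  have hstepA : ∑ j ∈ Finset.range (n + 1),
      ((Nat.choose (j + N) N : ℝ) / ρ ^ j) * q.coeff (n - j)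
      = ∑ k ∈ Finset.range (K + 1), F k := by
    have h1 : ∀ j ∈ Finset.range (n+1),
        ((Nat.choose (j + N) N : ℝ) / ρ ^ j) * q.coeff (n - j) = F (n - j) := by
      intro j hj
      have hjn : j ≤ n := Nat.lt_succ_iff.mp (Finset.mem_range.mp hj)
      rw [hF]
      simp only [Nat.sub_le n j, if_pos, Nat.sub_sub_self hjn]
    rw [Finset.sum_congr rfl h1, ← Finset.sum_range_reflect (fun k => F (n - k)) (n+1)]
    have h2 : ∀ j ∈ Finset.range (n+1), F (n - (n + 1 - 1 - j)) = F j := by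
      intro j hj
      have hjn : j ≤ n := Nat.lt_succ_iff.mp (Finset.mem_range.mp hj)
      congr 1
      omega
    rw [Finset.sum_congr rfl h2]
    apply Finset.sum_subset
    · exact Finset.range_subset_range.mpr (by omega)
    · intro k _ hk
      rw [hF]
      have : ¬ k ≤ n := by
        simp only [Finset.mem_range] at hk; omega
      simp [this]
  rw [hstepA]
  -- Step B : per-term bound
  have hstepB : ∀ k ∈ Finset.range (K+1),
      P * (q.coeff k * (ρ*c)^k) - P * (|q.coeff k| * ρ^k * (((d:ℝ)+1)*e)) ≤ F k := by
    intro k hk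
    have hkK : k ≤ K := Nat.lt_succ_iff.mp (Finset.mem_range.mp hk)
    by_cases hkd : k ≤ d
    · by_cases hkn : k ≤ n
      · -- main case
        obtain ⟨hWl, hWu⟩ := hRB k hkn hkd
        obtain ⟨W, hW⟩ : ∃ W : ℝ, W = (Nat.choose (n - k + N) N : ℝ) := ⟨_, rfl⟩
        rw [← hW] at hWl hWu
        have hW0 : 0 ≤ W := by rw [hW]; positivity
        have hFk : F k = q.coeff k * W * ρ^k / ρ^n := by
          rw [hF]
          simp only [if_pos hkn]
          rw [pow_sub₀ ρ (ne_of_gt hρ0) hkn, ← hW]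
          field_simp
        rw [hFk, hP]
        rw [div_mul_eq_mul_div, div_mul_eq_mul_div, ← sub_div, div_le_div_iff_of_pos_right (by positivity)]
        -- numerator inequality
        have hdk : (k:ℝ) ≤ (d:ℝ)+1 := by
          have : (k:ℝ) ≤ (d:ℝ) := by exact_mod_cast hkd
          linarith
        have heCn : 0 ≤ e * Cn := mul_nonneg he0 hCn0.le
        have hgap1 : c^k*Cn - W ≤ ((d:ℝ)+1)*e*Cn := by
          have h1 : c^k*Cn - W ≤ (k:ℝ)*e*Cn := by linarith only [hWl]
          have h2 : (k:ℝ)*(e*Cn) ≤ ((d:ℝ)+1)*(e*Cn) := mul_le_mul_of_nonneg_right hdk heCn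
          linarith only [h1, h2]
        have hgap0 : 0 ≤ c^k*Cn - W := by linarith only [hWu]
        have hkey : q.coeff k * (c^k*Cn - W) ≤ |q.coeff k| * (((d:ℝ)+1)*e*Cn) := by
          calc q.coeff k * (c^k*Cn - W) ≤ |q.coeff k| * (c^k*Cn - W) :=
                mul_le_mul_of_nonneg_right (le_abs_self _) hgap0
            _ ≤ |q.coeff k| * (((d:ℝ)+1)*e*Cn) :=
                mul_le_mul_of_nonneg_left hgap1 (abs_nonneg _)
        have hkey2 := mul_le_mul_of_nonneg_right hkey (pow_nonneg hρ0.le k)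
        have hrc : (ρ*c)^k = ρ^k * c^k := mul_pow ρ c k
        rw [hrc]
        ring_nf
        ring_nf at hkey2
        linarith only [hkey2]
      · -- n < k ≤ d : F k = 0
        push_neg at hkn
        have hFk : F k = 0 := by rw [hF]; simp [Nat.not_le.mpr hkn]
        rw [hFk]
        have hk1 : 1 ≤ k := by omega
        have hce : c ≤ e := by
          rw [hc, he, div_le_div_iff₀ (by linarith) (by positivity)]
          have hnd : (n:ℝ)+1 ≤ (d:ℝ) := by
            have : n+1 ≤ d := by omega
            exact_mod_cast this
          have hNcast : (N:ℝ) = (d:ℝ)+1+(N₀:ℝ) := by rw [hNd]; push_cast; ring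
          have hN00 : (0:ℝ) ≤ (N₀:ℝ) := Nat.cast_nonneg N₀
          nlinarith
        have hck : c^k ≤ c := by
          calc c^k ≤ c^1 := pow_le_pow_of_le_one hc0 hc1 hk1
            _ = c := pow_one c
        have hrk : (0:ℝ) ≤ ρ^k := pow_nonneg hρ0.le k
        have h1 : q.coeff k * (ρ*c)^k ≤ |q.coeff k| * ρ^k * (((d:ℝ)+1)*e) := by
          have hd1e : c ≤ ((d:ℝ)+1)*e := by
            have : e ≤ ((d:ℝ)+1)*e := le_mul_of_one_le_left he0 (by
              have : (0:ℝ) ≤ (d:ℝ) := Nat.cast_nonneg d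
              linarith)
            linarith only [hce, this]
          calc q.coeff k * (ρ*c)^k ≤ |q.coeff k| * (ρ*c)^k :=
                mul_le_mul_of_nonneg_right (le_abs_self _) (by positivity)
            _ = |q.coeff k| * (ρ^k * c^k) := by rw [mul_pow]
            _ ≤ |q.coeff k| * (ρ^k * (((d:ℝ)+1)*e)) := by
                apply mul_le_mul_of_nonneg_left _ (abs_nonneg _)
                apply mul_le_mul_of_nonneg_left _ hrk
                linarith only [hck, hd1e]
            _ = |q.coeff k| * ρ^k * (((d:ℝ)+1)*e) := by ring
        have := mul_le_mul_of_nonneg_left h1 hP0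
        linarith only [this]
    · -- k > d : coeff = 0
      have hcoeff : q.coeff k = 0 :=
        q.coeff_eq_zero_of_natDegree_lt (by omega)
      rw [hF]
      simp [hcoeff]
  -- Step C : sum the bounds
  have hsum := Finset.sum_le_sum hstepB
  have hC1 : ∑ k ∈ Finset.range (K+1),
      (P * (q.coeff k * (ρ*c)^k) - P * (|q.coeff k| * ρ^k * (((d:ℝ)+1)*e)))
      = P * q.eval (ρ*c) - P * ((((d:ℝ)+1)*e) * A) := by
    rw [Finset.sum_sub_distrib, ← Finset.mul_sum, ← Finset.mul_sum]
    have heval : q.eval (ρ*c) = ∑ k ∈ Finset.range (K+1), q.coeff k * (ρ*c)^k := by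
      rw [Polynomial.eval_eq_sum_range' (show q.natDegree < K+1 by omega)]
    have hAK : ∑ k ∈ Finset.range (K+1), |q.coeff k| * ρ^k = A := by
      rw [hA]
      symm
      apply Finset.sum_subset (Finset.range_subset_range.mpr (by omega))
      intro k _ hk
      have hkd : d < k := by
        simp only [Finset.mem_range] at hk; omega
      rw [q.coeff_eq_zero_of_natDegree_lt (by omega)]
      simp
    have hAsum : ∑ k ∈ Finset.range (K+1), |q.coeff k| * ρ^k * (((d:ℝ)+1)*e)
        = (((d:ℝ)+1)*e) * A := by
      rw [← Finset.sum_mul, hAK]; ring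
    rw [heval, hAsum]
  rw [hC1] at hsum
  -- Step D : conclude
  have hin : ρ*c ∈ Set.Icc (0:ℝ) ρ :=
    ⟨by positivity, mul_le_of_le_one_right hρ0.le hc1⟩
  have hm2 : m ≤ q.eval (ρ*c) := hmle _ hin
  have hXm : (((d:ℝ)+1)*e)*A ≤ m := by
    rw [he]
    calc ((d:ℝ)+1)*((d:ℝ)/((N₀:ℝ)+2))*A = ((d:ℝ)+1)*((d:ℝ)/((N₀:ℝ)+2))*A := rfl
      _ ≤ m := heA
  have hfin : P * ((((d:ℝ)+1)*e) * A) ≤ P * q.eval (ρ*c) :=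
    mul_le_mul_of_nonneg_left (le_trans hXm hm2) hP0
  linarith only [hsum, hfin]

theorem stmt2 (q : Polynomial ℝ) (hq : ∀ t ∈ Set.Icc (0:ℝ) 1, 0 < q.eval t) :
    ∃ (u : ℕ → ℝ) (R : ℝ), 1 < R ∧ Summable (fun n => |u n| * R ^ n) ∧
      (∀ n, 0 ≤ u n) ∧ 0 < u 0 ∧
      (∀ n, 0 ≤ ∑ j ∈ Finset.range (n + 1), u j * q.coeff (n - j)) ∧
      0 < ∑ j ∈ Finset.range 1, u j * q.coeff (0 - j) := by
  -- Step 1: get ρ > 1 with q > 0 on [0, ρ]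
  obtain ⟨ρ, hρ1, hρpos⟩ : ∃ ρ : ℝ, 1 < ρ ∧ ∀ t ∈ Set.Icc (0:ℝ) ρ, 0 < q.eval t := by
    have h1 : (0:ℝ) < q.eval 1 := hq 1 ⟨by norm_num, le_refl 1⟩
    have hc : Continuous fun x : ℝ => q.eval x := q.continuous
    have hmem : {t : ℝ | 0 < q.eval t} ∈ nhds (1:ℝ) :=
      (isOpen_lt continuous_const hc).mem_nhds h1
    obtain ⟨δ, hδ, hball⟩ := Metric.mem_nhds_iff.mp hmem
    refine ⟨1 + δ/2, by linarith, ?_⟩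
    intro t ht
    rcases le_or_gt t 1 with h | h
    · exact hq t ⟨ht.1, h⟩
    · apply hball
      simp only [Metric.mem_ball, Real.dist_eq]
      rw [abs_of_pos (by linarith)]
      have := ht.2; linarith
  have hρ0 : (0:ℝ) < ρ := by linarith
  -- Step 2: minimum m of q on [0, ρ]
  obtain ⟨x₀, hx₀, hmin⟩ := isCompact_Icc.exists_isMinOn (Set.nonempty_Icc.mpr hρ0.le)
    (q.continuous.continuousOn (s := Set.Icc 0 ρ))
  have hm0 : 0 < q.eval x₀ := hρpos x₀ hx₀
  have hmle : ∀ x ∈ Set.Icc (0:ℝ) ρ, q.eval x₀ ≤ q.eval x := fun x hx => hmin hx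
  -- Step 3: constants
  obtain ⟨N₀, hN₀⟩ := exists_nat_ge
    (((q.natDegree:ℝ)+1) * (q.natDegree:ℝ)
      * (∑ k ∈ Finset.range (q.natDegree+1), |q.coeff k| * ρ ^ k) / q.eval x₀)
  have hA0 : 0 ≤ ∑ k ∈ Finset.range (q.natDegree+1), |q.coeff k| * ρ ^ k :=
    Finset.sum_nonneg fun k _ => by positivity
  have heA : ((q.natDegree:ℝ)+1) * ((q.natDegree:ℝ)/((N₀:ℝ)+2))
      * (∑ k ∈ Finset.range (q.natDegree+1), |q.coeff k| * ρ ^ k) ≤ q.eval x₀ := by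
    rw [div_le_iff₀ (by positivity)] at hN₀
    have h2 : (0:ℝ) < (N₀:ℝ) + 2 := by positivity
    calc ((q.natDegree:ℝ)+1) * ((q.natDegree:ℝ)/((N₀:ℝ)+2))
          * (∑ k ∈ Finset.range (q.natDegree+1), |q.coeff k| * ρ ^ k)
        = ((q.natDegree:ℝ)+1)*(q.natDegree:ℝ)
          *(∑ k ∈ Finset.range (q.natDegree+1), |q.coeff k| * ρ ^ k) / ((N₀:ℝ)+2) := by ring
    _ ≤ q.eval x₀ := by
        rw [div_le_iff₀ h2]
        nlinarith [hm0.le]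
  -- Step 4: conclude
  refine ⟨fun j => (Nat.choose (j + (q.natDegree+1+N₀)) (q.natDegree+1+N₀) : ℝ) / ρ ^ j,
    (1+ρ)/2, by linarith, summ_lemma ρ hρ1 _, fun n => by positivity, by norm_num, ?_, ?_⟩
  · intro n
    exact main_pos q ρ (q.eval x₀) _ N₀ hρ1 hm0 hmle rfl heA n
  · have h0 : ∑ j ∈ Finset.range 1,
        ((Nat.choose (j + (q.natDegree+1+N₀)) (q.natDegree+1+N₀) : ℝ) / ρ ^ j) * q.coeff (0 - j)
        = q.coeff 0 := by simp
    rw [h0, Polynomial.coeff_zero_eq_eval_zero]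
    exact hρpos 0 ⟨le_refl 0, hρ0.le⟩
end

section
/- Let T be an n×n complex matrix that is diagonalizable with all eigenvalues on the unit circle. Then there exists a polynomial p with real coefficients, of the form p(t) = (1-t)·∏_{1≤k<ℓ≤n}(1 - 2Re(λ_k conj(λ_ℓ)) t + t²) where λ_j are the eigenvalues, such that ∑_j p_j T*^j T^j = 0. -/
open Polynomial Finset Matrix

private lemma stmt9_factor (μ x : ℂ) (hμ : μ * (starRingEnd ℂ) μ = 1)
    (hx : x = μ ∨ x = (starRingEnd ℂ) μ) :
    1 - ((2 * μ.re : ℝ) : ℂ) * x + x ^ 2 = 0 := by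
  have h2 : ((2 * μ.re : ℝ) : ℂ) = μ + (starRingEnd ℂ) μ := by
    push_cast
    rw [Complex.add_conj]
    push_cast; ring
  rcases hx with rfl | rfl <;> rw [h2] <;> linear_combination -hμ

theorem stmt9 {n : ℕ} (T : Matrix (Fin n) (Fin n) ℂ)
    (lam : Fin n → ℂ) (P : Matrix (Fin n) (Fin n) ℂ) (hP : IsUnit P)
    (hdiag : T = P * Matrix.diagonal lam * P⁻¹)
    (hcirc : ∀ j, ‖lam j‖ = 1) :
    ∃ p : Polynomial ℝ,
      p = (1 - X) * ∏ kl ∈ Finset.univ.filter (fun kl : Fin n × Fin n => kl.1 < kl.2),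
            (1 - Polynomial.C (2 * (lam kl.1 * (starRingEnd ℂ) (lam kl.2)).re) * X + X ^ 2) ∧
      ∑ j ∈ Finset.range (p.natDegree + 1),
        ((p.coeff j : ℂ)) • ((T ^ j)ᴴ * T ^ j) = 0 := by
  set p : Polynomial ℝ := (1 - X) * ∏ kl ∈ Finset.univ.filter (fun kl : Fin n × Fin n => kl.1 < kl.2),
            (1 - Polynomial.C (2 * (lam kl.1 * (starRingEnd ℂ) (lam kl.2)).re) * X + X ^ 2) with hp
  refine ⟨p, hp, ?_⟩
  have hdet : IsUnit P.det := (Matrix.isUnit_iff_isUnit_det P).mp hP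
  have hPinvP : P⁻¹ * P = 1 := Matrix.nonsing_inv_mul P hdet
  have hPPinv : P * P⁻¹ = 1 := Matrix.mul_nonsing_inv P hdet
  -- unit norm facts
  have hnorm : ∀ j, lam j * (starRingEnd ℂ) (lam j) = 1 := by
    intro j
    rw [Complex.mul_conj]
    norm_cast
    rw [Complex.normSq_eq_norm_sq, hcirc j]; norm_num
  -- roots of p
  have hroot : ∀ k l : Fin n, Polynomial.aeval ((starRingEnd ℂ) (lam k) * lam l) p = 0 := by
    intro k l
    rw [hp, _root_.map_mul]
    rcases eq_or_ne k l with rfl | hkl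
    · have : Polynomial.aeval ((starRingEnd ℂ) (lam k) * lam k) ((1 : ℝ[X]) - X) = 0 := by
        simp [mul_comm ((starRingEnd ℂ) (lam k)) (lam k), hnorm k]
      rw [this, zero_mul]
    · have hlt : k < l ∨ l < k := hkl.lt_or_gt
      apply mul_eq_zero_of_right
      rw [_root_.map_prod]
      rcases hlt with h | h
      · apply Finset.prod_eq_zero (i := (k, l))
          (Finset.mem_filter.mpr ⟨Finset.mem_univ _, h⟩)
        simp only [map_add, map_sub, _root_.map_one, _root_.map_mul, map_pow, aeval_X, aeval_C,
          aeval_one]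
        rw [← _root_.map_mul (algebraMap ℝ ℂ), Complex.coe_algebraMap]
        apply stmt9_factor (lam k * (starRingEnd ℂ) (lam l))
        · rw [_root_.map_mul, Complex.conj_conj, mul_mul_mul_comm, hnorm k,
            mul_comm ((starRingEnd ℂ) (lam l)) (lam l), hnorm l, one_mul]
        · exact Or.inr (by rw [_root_.map_mul, Complex.conj_conj])
      · apply Finset.prod_eq_zero (i := (l, k))
          (Finset.mem_filter.mpr ⟨Finset.mem_univ _, h⟩)
        simp only [map_add, map_sub, _root_.map_one, _root_.map_mul, map_pow, aeval_X, aeval_C,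
          aeval_one]
        rw [← _root_.map_mul (algebraMap ℝ ℂ), Complex.coe_algebraMap]
        apply stmt9_factor (lam l * (starRingEnd ℂ) (lam k))
        · rw [_root_.map_mul, Complex.conj_conj, mul_mul_mul_comm, hnorm l,
            mul_comm ((starRingEnd ℂ) (lam k)) (lam k), hnorm k, one_mul]
        · exact Or.inl (mul_comm _ _)
  -- the coefficient-sum vanishes
  have hsum : ∀ k l : Fin n,
      ∑ j ∈ Finset.range (p.natDegree + 1),
        (p.coeff j : ℂ) * ((starRingEnd ℂ) (lam k) * lam l) ^ j = 0 := by
    intro k l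
    have hq : (p.map (algebraMap ℝ ℂ)).natDegree = p.natDegree :=
      Polynomial.natDegree_map_eq_of_injective (algebraMap ℝ ℂ).injective p
    have := Polynomial.eval_eq_sum_range (p := p.map (algebraMap ℝ ℂ))
      ((starRingEnd ℂ) (lam k) * lam l)
    rw [hq] at this
    have heval : (p.map (algebraMap ℝ ℂ)).eval ((starRingEnd ℂ) (lam k) * lam l) = 0 := by
      rw [Polynomial.eval_map, ← Polynomial.aeval_def]
      exact hroot k l
    rw [heval] at this
    simpa [Polynomial.coeff_map] using this.symm
  -- powers of T
  set D : Matrix (Fin n) (Fin n) ℂ := Matrix.diagonal lam with hD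
  have hTpow : ∀ j : ℕ, T ^ j = P * D ^ j * P⁻¹ := by
    intro j
    induction j with
    | zero => simp [hPPinv]
    | succ j ih =>
        rw [pow_succ, ih, hdiag, pow_succ]
        rw [show P * D ^ j * P⁻¹ * (P * D * P⁻¹) = P * D ^ j * (P⁻¹ * P) * D * P⁻¹ by
          simp only [Matrix.mul_assoc], hPinvP]
        simp [Matrix.mul_assoc]
  -- rewrite the sum
  have hterm : ∀ j : ℕ, (T ^ j)ᴴ * T ^ j
      = (P⁻¹)ᴴ * ((D ^ j)ᴴ * (Pᴴ * P) * D ^ j) * P⁻¹ := by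
    intro j
    rw [hTpow j]
    simp only [Matrix.conjTranspose_mul, Matrix.mul_assoc]
  calc ∑ j ∈ Finset.range (p.natDegree + 1), ((p.coeff j : ℂ)) • ((T ^ j)ᴴ * T ^ j)
      = (P⁻¹)ᴴ * (∑ j ∈ Finset.range (p.natDegree + 1),
          ((p.coeff j : ℂ)) • ((D ^ j)ᴴ * (Pᴴ * P) * D ^ j)) * P⁻¹ := by
        rw [Matrix.mul_sum, Matrix.sum_mul]
        refine Finset.sum_congr rfl fun j _ => ?_
        rw [hterm j, Matrix.mul_smul, Matrix.smul_mul]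
    _ = 0 := by
        have hmid : (∑ j ∈ Finset.range (p.natDegree + 1),
            ((p.coeff j : ℂ)) • ((D ^ j)ᴴ * (Pᴴ * P) * D ^ j)) = 0 := by
          ext k l
          simp only [Matrix.sum_apply, Matrix.smul_apply, Matrix.zero_apply, smul_eq_mul]
          have hentry : ∀ j : ℕ, ((D ^ j)ᴴ * (Pᴴ * P) * D ^ j) k l
              = ((starRingEnd ℂ) (lam k)) ^ j * (Pᴴ * P) k l * (lam l) ^ j := by
            intro j
            rw [hD, Matrix.diagonal_pow, Matrix.diagonal_conjTranspose,
              Matrix.mul_diagonal, Matrix.diagonal_mul]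
            simp [Pi.star_apply, Pi.pow_apply, star_pow, RCLike.star_def,
              mul_comm, mul_assoc, mul_left_comm]
          calc ∑ j ∈ Finset.range (p.natDegree + 1),
                (p.coeff j : ℂ) * ((D ^ j)ᴴ * (Pᴴ * P) * D ^ j) k l
              = (Pᴴ * P) k l * ∑ j ∈ Finset.range (p.natDegree + 1),
                  (p.coeff j : ℂ) * ((starRingEnd ℂ) (lam k) * lam l) ^ j := by
                rw [Finset.mul_sum]
                refine Finset.sum_congr rfl fun j _ => ?_
                rw [hentry j, mul_pow]; ring
            _ = 0 := by rw [hsum k l, mul_zero]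
        rw [hmid, Matrix.mul_zero, Matrix.zero_mul]
end

section
/- Let T be a power bounded operator on a Hilbert space H. If there exists an invertible bounded operator W such that WTW^{-1} is a contraction, then any bounded operator D with ‖Dh‖ = ‖D_{WTW^{-1}} W h‖ for all h (where D_S = (I - S*S)^{1/2}) satisfies: there exist constants c, C > 0 such that c‖h‖² ≤ ∑_{n≥0} ‖DT^n h‖² + limsup_n ‖T^n h‖² ≤ C‖h‖² for all h ∈ H. -/
open ContinuousLinearMap Filter

theorem stmt10 {H : Type*} [NormedAddCommGroup H] [InnerProductSpace ℂ H]
    [CompleteSpace H]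
    (T : H →L[ℂ] H) (M : ℝ) (hpb : ∀ n : ℕ, ‖T ^ n‖ ≤ M)
    (W Winv : H →L[ℂ] H)
    (hW1 : W ∘L Winv = ContinuousLinearMap.id ℂ H)
    (hW2 : Winv ∘L W = ContinuousLinearMap.id ℂ H)
    (hcontr : ‖W ∘L T ∘L Winv‖ ≤ 1)
    (DS : H →L[ℂ] H) (hDSsa : IsSelfAdjoint DS)
    (hDSpos : ∀ h : H, 0 ≤ (inner ℂ (DS h) h : ℂ).re)
    (hDSsq : DS ∘L DS = ContinuousLinearMap.id ℂ H -
      adjoint (W ∘L T ∘L Winv) ∘L (W ∘L T ∘L Winv))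
    (D : H →L[ℂ] H) (hD : ∀ h : H, ‖D h‖ = ‖DS (W h)‖) :
    ∃ c C : ℝ, 0 < c ∧ 0 < C ∧ ∀ h : H,
      c * ‖h‖ ^ 2 ≤ (∑' n : ℕ, ‖D ((T ^ n) h)‖ ^ 2) +
          limsup (fun n : ℕ => ‖(T ^ n) h‖ ^ 2) atTop ∧
      (∑' n : ℕ, ‖D ((T ^ n) h)‖ ^ 2) +
          limsup (fun n : ℕ => ‖(T ^ n) h‖ ^ 2) atTop ≤ C * ‖h‖ ^ 2 := by
  set S : H →L[ℂ] H := W ∘L T ∘L Winv with hSdef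
  set a : ℝ := max ‖W‖ 1 with ha
  set b : ℝ := max ‖Winv‖ 1 with hb
  have ha1 : (1:ℝ) ≤ a := le_max_right _ _
  have hb1 : (1:ℝ) ≤ b := le_max_right _ _
  have hWinvW : ∀ x : H, Winv (W x) = x := fun x => by
    have := ContinuousLinearMap.ext_iff.mp hW2 x
    simpa using this
  -- contraction property
  have hSc : ∀ x : H, ‖S x‖ ≤ ‖x‖ := by
    intro x
    calc ‖S x‖ ≤ ‖S‖ * ‖x‖ := le_opNorm _ _
    _ ≤ 1 * ‖x‖ := mul_le_mul_of_nonneg_right hcontr (norm_nonneg x)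
    _ = ‖x‖ := one_mul _
  -- key defect identity
  have hkey : ∀ x : H, ‖DS x‖ ^ 2 = ‖x‖ ^ 2 - ‖S x‖ ^ 2 := by
    intro x
    have h1 : DS (DS x) = x - (adjoint S) (S x) := by
      have := ContinuousLinearMap.ext_iff.mp hDSsq x
      simpa using this
    have h2 : (inner ℂ (DS x) (DS x) : ℂ) = inner ℂ x x - inner ℂ (S x) (S x) := by
      have hadj : adjoint DS = DS := hDSsa
      calc (inner ℂ (DS x) (DS x) : ℂ) = inner ℂ x (adjoint DS (DS x)) := (adjoint_inner_right _ _ _).symm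
      _ = inner ℂ x (DS (DS x)) := by rw [hadj]
      _ = inner ℂ x x - inner ℂ x (adjoint S (S x)) := by rw [h1, inner_sub_right]
      _ = inner ℂ x x - inner ℂ (S x) (S x) := by rw [adjoint_inner_right]
    have h3 : ∀ y : H, (inner ℂ y y : ℂ).re = ‖y‖ ^ 2 := fun y => by
      simpa [RCLike.re_to_complex] using inner_self_eq_norm_sq (𝕜 := ℂ) y
    have h4 := congrArg Complex.re h2
    simp only [Complex.sub_re, h3] at h4
    exact h4
  -- powers: S^n ∘ W = W ∘ T^n pointwise
  have hSn : ∀ (n : ℕ) (x : H), (S ^ n) (W x) = W ((T ^ n) x) := by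
    intro n
    induction n with
    | zero => intro x; simp
    | succ n ih =>
      intro x
      rw [pow_succ', pow_succ']
      simp only [ContinuousLinearMap.mul_apply]
      rw [ih x]
      show (W ∘L T ∘L Winv) (W ((T ^ n) x)) = W (T ((T ^ n) x))
      simp [hWinvW]
  refine ⟨1 / (a ^ 2 * b ^ 2), a ^ 2 * (1 + b ^ 2), by positivity, by positivity, ?_⟩
  intro h
  set w : H := W h with hw
  set g : ℕ → ℝ := fun n => ‖(S ^ n) w‖ ^ 2 with hg
  have hg0 : ∀ n, 0 ≤ g n := fun n => sq_nonneg _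
  have hganti : Antitone g := by
    apply antitone_nat_of_succ_le
    intro n
    have : ‖(S ^ (n+1)) w‖ ≤ ‖(S ^ n) w‖ := by
      rw [pow_succ']
      simpa using hSc ((S ^ n) w)
    exact pow_le_pow_left₀ (norm_nonneg _) this 2
  set L : ℝ := ⨅ n, g n with hL
  have hbdd : BddBelow (Set.range g) := ⟨0, by rintro x ⟨n, rfl⟩; exact hg0 n⟩
  have hgL : Tendsto g atTop (nhds L) := tendsto_atTop_ciInf hganti hbdd
  have hLle : ∀ n, L ≤ g n := fun n => ciInf_le hbdd n
  have hL0 : 0 ≤ L := le_ciInf hg0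
  -- relate D terms to g
  have hDterm : ∀ n : ℕ, ‖D ((T ^ n) h)‖ ^ 2 = g n - g (n + 1) := by
    intro n
    have e1 : (S ^ (n+1)) w = S ((S ^ n) w) := by
      rw [pow_succ']; rfl
    rw [hD, ← hSn n h, hkey, ← hw, ← e1]
  -- sum
  have hsum : HasSum (fun n : ℕ => ‖D ((T ^ n) h)‖ ^ 2) (g 0 - L) := by
    rw [hasSum_iff_tendsto_nat_of_nonneg (fun n => sq_nonneg _)]
    have : ∀ n : ℕ, ∑ i ∈ Finset.range n, ‖D ((T ^ i) h)‖ ^ 2 = g 0 - g n := by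
      intro n
      rw [Finset.sum_congr rfl (fun i _ => hDterm i)]
      exact Finset.sum_range_sub' g n
    simp_rw [this]
    exact tendsto_const_nhds.sub hgL
  have htsum : (∑' n : ℕ, ‖D ((T ^ n) h)‖ ^ 2) = g 0 - L := hsum.tsum_eq
  -- relate f to g
  set f : ℕ → ℝ := fun n => ‖(T ^ n) h‖ ^ 2 with hf
  have hfg1 : ∀ n, f n ≤ b ^ 2 * g n := by
    intro n
    have h1 : (T ^ n) h = Winv ((S ^ n) w) := by rw [hw, hSn n h, hWinvW]
    have h2 : ‖(T ^ n) h‖ ≤ b * ‖(S ^ n) w‖ := by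
      rw [h1]
      calc ‖Winv ((S ^ n) w)‖ ≤ ‖Winv‖ * ‖(S ^ n) w‖ := le_opNorm _ _
      _ ≤ b * ‖(S ^ n) w‖ := mul_le_mul_of_nonneg_right (le_max_left _ _) (norm_nonneg _)
    calc f n = ‖(T ^ n) h‖ ^ 2 := rfl
    _ ≤ (b * ‖(S ^ n) w‖) ^ 2 := pow_le_pow_left₀ (norm_nonneg _) h2 2
    _ = b ^ 2 * g n := by ring
  have hfg2 : ∀ n, g n ≤ a ^ 2 * f n := by
    intro n
    have h2 : ‖(S ^ n) w‖ ≤ a * ‖(T ^ n) h‖ := by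
      rw [hw, hSn n h]
      calc ‖W ((T ^ n) h)‖ ≤ ‖W‖ * ‖(T ^ n) h‖ := le_opNorm _ _
      _ ≤ a * ‖(T ^ n) h‖ := mul_le_mul_of_nonneg_right (le_max_left _ _) (norm_nonneg _)
    calc g n = ‖(S ^ n) w‖ ^ 2 := rfl
    _ ≤ (a * ‖(T ^ n) h‖) ^ 2 := pow_le_pow_left₀ (norm_nonneg _) h2 2
    _ = a ^ 2 * f n := by ring
  have hfbdd : IsBoundedUnder (· ≤ ·) atTop f :=
    isBoundedUnder_of ⟨b ^ 2 * g 0, fun n => (hfg1 n).trans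
      (mul_le_mul_of_nonneg_left (hganti (Nat.zero_le n)) (by positivity))⟩
  have hfcobdd : IsCoboundedUnder (· ≤ ·) atTop f :=
    IsBoundedUnder.isCoboundedUnder_le (isBoundedUnder_of ⟨0, fun n => sq_nonneg _⟩)
  set ls : ℝ := limsup f atTop with hls
  -- ls ≤ b^2 * L
  have hlsub : ls ≤ b ^ 2 * L := by
    have hstep : ∀ m : ℕ, ls ≤ b ^ 2 * g m := by
      intro m
      apply limsup_le_of_le hfcobdd
      filter_upwards [eventually_ge_atTop m] with n hn
      exact (hfg1 n).trans (mul_le_mul_of_nonneg_left (hganti hn) (by positivity))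
    have hb2 : (0:ℝ) < b ^ 2 := by positivity
    have : ls / b ^ 2 ≤ L := le_ciInf fun m => by
      rw [div_le_iff₀ hb2]; linarith [hstep m]
    calc ls = (ls / b ^ 2) * b ^ 2 := by field_simp
    _ ≤ L * b ^ 2 := mul_le_mul_of_nonneg_right this (le_of_lt hb2)
    _ = b ^ 2 * L := mul_comm _ _
  -- L / a^2 ≤ ls
  have hlslb : L ≤ a ^ 2 * ls := by
    have ha2 : (0:ℝ) < a ^ 2 := by positivity
    have h1 : L / a ^ 2 ≤ ls := by
      apply le_limsup_of_frequently_le _ hfbdd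
      apply Frequently.of_forall
      intro n
      rw [div_le_iff₀ ha2]
      calc L ≤ g n := hLle n
      _ ≤ a ^ 2 * f n := hfg2 n
      _ = f n * a ^ 2 := mul_comm _ _
    calc L = (L / a ^ 2) * a ^ 2 := by field_simp
    _ ≤ ls * a ^ 2 := mul_le_mul_of_nonneg_right h1 (le_of_lt ha2)
    _ = a ^ 2 * ls := mul_comm _ _
  have hls0 : 0 ≤ ls := by
    apply le_limsup_of_frequently_le _ hfbdd
    exact Frequently.of_forall fun n => sq_nonneg _
  -- norm comparisons between h and w
  have hwa : ‖w‖ ^ 2 ≤ a ^ 2 * ‖h‖ ^ 2 := by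
    have : ‖w‖ ≤ a * ‖h‖ :=
      (le_opNorm W h).trans (mul_le_mul_of_nonneg_right (le_max_left _ _) (norm_nonneg _))
    calc ‖w‖ ^ 2 ≤ (a * ‖h‖) ^ 2 := pow_le_pow_left₀ (norm_nonneg _) this 2
    _ = a ^ 2 * ‖h‖ ^ 2 := by ring
  have hhb : ‖h‖ ^ 2 ≤ b ^ 2 * ‖w‖ ^ 2 := by
    have : ‖h‖ ≤ b * ‖w‖ := by
      conv_lhs => rw [← hWinvW h]
      exact (le_opNorm Winv w).trans (mul_le_mul_of_nonneg_right (le_max_left _ _) (norm_nonneg _))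
    calc ‖h‖ ^ 2 ≤ (b * ‖w‖) ^ 2 := pow_le_pow_left₀ (norm_nonneg _) this 2
    _ = b ^ 2 * ‖w‖ ^ 2 := by ring
  have hLw : L ≤ ‖w‖ ^ 2 := by simpa [hg] using hLle 0
  have hg00 : g 0 = ‖w‖ ^ 2 := by simp [hg]
  rw [htsum, hg00]
  constructor
  · -- lower bound
    rw [div_mul_eq_mul_div, one_mul, div_le_iff₀ (by positivity : (0:ℝ) < a ^ 2 * b ^ 2)]
    have ha2 : (1:ℝ) ≤ a ^ 2 := by
      have := mul_le_mul ha1 ha1 zero_le_one (zero_le_one.trans ha1)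
      nlinarith
    have e1 : (0:ℝ) ≤ b ^ 2 * (a ^ 2 - 1) := mul_nonneg (sq_nonneg b) (by linarith)
    have e2 : b ^ 2 * (a ^ 2 - 1) * L ≤ b ^ 2 * (a ^ 2 - 1) * ‖w‖ ^ 2 :=
      mul_le_mul_of_nonneg_left hLw e1
    have e3 : b ^ 2 * L ≤ b ^ 2 * (a ^ 2 * ls) :=
      mul_le_mul_of_nonneg_left hlslb (sq_nonneg b)
    nlinarith [e2, e3, hhb]
  · nlinarith [sq_nonneg ‖h‖]
end

section
/- Let β̃ ∈ ℓ¹ with β̃_0 > 0 and all β̃_n ≥ 0, and set β_n = ∑_{j=0}^n β̃_j. Let T be a power bounded operator, D a bounded operator, and B a bounded operator satisfying ‖Bh‖² - ‖BTh‖² = ∑_{n≥0} β̃_n ‖DT^n h‖² for all h. Then ∑_{n≥0} ‖DT^n h‖² converges, lim_{N→∞} ‖BT^N h‖² exists, and ‖Bh‖² = ∑_{n≥0} β_n ‖DT^n h‖² + lim_{N→∞} ‖BT^N h‖² for every h ∈ H. -/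
open ContinuousLinearMap Filter Finset

theorem stmt13 {H : Type*} [NormedAddCommGroup H] [InnerProductSpace ℂ H]
    [CompleteSpace H]
    (bt : ℕ → ℝ) (hbt_sum : Summable bt) (hbt0 : 0 < bt 0) (hbt_nn : ∀ n, 0 ≤ bt n)
    (T : H →L[ℂ] H) (M : ℝ) (hpb : ∀ n : ℕ, ‖T ^ n‖ ≤ M)
    (D B : H →L[ℂ] H)
    (hB : ∀ h : H, ‖B h‖ ^ 2 - ‖B (T h)‖ ^ 2 = ∑' n : ℕ, bt n * ‖D ((T ^ n) h)‖ ^ 2) :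
    ∀ h : H,
      (Summable fun n : ℕ => ‖D ((T ^ n) h)‖ ^ 2) ∧
      ∃ l : ℝ, Tendsto (fun N : ℕ => ‖B ((T ^ N) h)‖ ^ 2) atTop (nhds l) ∧
        ‖B h‖ ^ 2 =
          (∑' n : ℕ, (∑ j ∈ Finset.range (n + 1), bt j) * ‖D ((T ^ n) h)‖ ^ 2) + l := by
  intro h
  set a : ℕ → ℝ := fun n => ‖D ((T ^ n) h)‖ ^ 2 with ha_def
  have ha_nn : ∀ n, 0 ≤ a n := fun n => sq_nonneg _
  have hM : 0 ≤ M := le_trans (norm_nonneg _) (hpb 0)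
  set C : ℝ := (‖D‖ * (M * ‖h‖)) ^ 2 with hC_def
  have ha_bd : ∀ n, a n ≤ C := by
    intro n
    have h1 : ‖D ((T ^ n) h)‖ ≤ ‖D‖ * (M * ‖h‖) := by
      calc ‖D ((T ^ n) h)‖ ≤ ‖D‖ * ‖(T ^ n) h‖ := le_opNorm _ _
        _ ≤ ‖D‖ * (‖T ^ n‖ * ‖h‖) :=
            mul_le_mul_of_nonneg_left (le_opNorm _ _) (norm_nonneg _)
        _ ≤ ‖D‖ * (M * ‖h‖) := by
            apply mul_le_mul_of_nonneg_left _ (norm_nonneg _)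
            exact mul_le_mul_of_nonneg_right (hpb n) (norm_nonneg _)
    exact pow_le_pow_left₀ (norm_nonneg _) h1 2
  set f : ℕ → ℝ := fun k => ‖B ((T ^ k) h)‖ ^ 2 with hf_def
  have hf_nn : ∀ k, 0 ≤ f k := fun k => sq_nonneg _
  -- key identity
  have hkey : ∀ k, f k - f (k + 1) = ∑' n, bt n * a (n + k) := by
    intro k
    have h1 := hB ((T ^ k) h)
    have h2 : T ((T ^ k) h) = (T ^ (k + 1)) h := by
      rw [pow_succ', ContinuousLinearMap.mul_apply]
    have h3 : ∀ n, (T ^ n) ((T ^ k) h) = (T ^ (n + k)) h := by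
      intro n; rw [pow_add, ContinuousLinearMap.mul_apply]
    rw [h2] at h1
    simp only [h3] at h1
    exact h1
  have hsb : ∀ k, Summable (fun n => bt n * a (n + k)) := by
    intro k
    refine Summable.of_nonneg_of_le
      (fun n => mul_nonneg (hbt_nn n) (ha_nn _))
      (fun n => mul_le_mul_of_nonneg_left (ha_bd _) (hbt_nn n))
      (hbt_sum.mul_right C)
  have hg_nn : ∀ k, (0:ℝ) ≤ ∑' n, bt n * a (n + k) :=
    fun k => tsum_nonneg (fun n => mul_nonneg (hbt_nn n) (ha_nn _))
  have hg_ge : ∀ k, bt 0 * a k ≤ ∑' n, bt n * a (n + k) := by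
    intro k
    have := Summable.le_tsum (hsb k) 0 (fun j _ => mul_nonneg (hbt_nn j) (ha_nn _))
    simpa using this
  -- telescoping
  have htel : ∀ N, f 0 - f N = ∑ k ∈ Finset.range N, ∑' n, bt n * a (n + k) := by
    intro N
    rw [← Finset.sum_range_sub' f N]
    exact Finset.sum_congr rfl (fun k _ => hkey k)
  -- summability of a
  have hsum_a : Summable a := by
    apply summable_of_sum_range_le (c := f 0 / bt 0) ha_nn
    intro N
    rw [le_div_iff₀ hbt0]
    calc (∑ k ∈ range N, a k) * bt 0 = ∑ k ∈ range N, bt 0 * a k := by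
          rw [Finset.sum_mul]; exact Finset.sum_congr rfl (fun k _ => mul_comm _ _)
      _ ≤ ∑ k ∈ range N, ∑' n, bt n * a (n + k) :=
          Finset.sum_le_sum (fun k _ => hg_ge k)
      _ = f 0 - f N := (htel N).symm
      _ ≤ f 0 := by linarith [hf_nn N]
  -- limit of f
  have hanti : Antitone f := by
    apply antitone_nat_of_succ_le
    intro k
    have := hkey k
    have := hg_nn k
    linarith
  have hbdd : BddBelow (Set.range f) := by
    refine ⟨0, ?_⟩
    rintro x ⟨k, rfl⟩
    exact hf_nn k
  have hl : Tendsto f atTop (nhds (⨅ k, f k)) := tendsto_atTop_ciInf hanti hbdd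
  set l : ℝ := ⨅ k, f k with hl_def
  -- tails
  set A : ℕ → ℝ := fun j => ∑' m, a (j + m) with hA_def
  have hsa_shift : ∀ j : ℕ, Summable (fun m => a (j + m)) := by
    intro j
    exact hsum_a.comp_injective (add_right_injective j)
  have hA_nn : ∀ j, 0 ≤ A j := fun j => tsum_nonneg (fun m => ha_nn _)
  have hA_eq : ∀ j, (∑ i ∈ Finset.range j, a i) + A j = ∑' n, a n := by
    intro j
    have := Summable.sum_add_tsum_nat_add j hsum_a (f := a)
    rw [← this]
    congr 1
    exact tsum_congr (fun i => by rw [add_comm])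
  have hA_anti : ∀ {i j : ℕ}, i ≤ j → A j ≤ A i := by
    intro i j hij
    have h1 := hA_eq i
    have h2 := hA_eq j
    have h3 : (∑ k ∈ Finset.range i, a k) ≤ ∑ k ∈ Finset.range j, a k :=
      Finset.sum_le_sum_of_subset_of_nonneg
        (Finset.range_subset_range.mpr hij) (fun k _ _ => ha_nn k)
    linarith
  have hA_tendsto : Tendsto A atTop (nhds 0) := by
    have h1 : Tendsto (fun N => ∑ i ∈ Finset.range N, a i) atTop (nhds (∑' n, a n)) :=
      hsum_a.hasSum.tendsto_sum_nat
    have h2 : A = fun N => (∑' n, a n) - ∑ i ∈ Finset.range N, a i := by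
      funext N
      have := hA_eq N
      linarith
    rw [h2]
    have := (tendsto_const_nhds (x := ∑' n, a n) (f := atTop (α := ℕ))).sub h1
    simpa using this
  -- partial tail formula
  have htail : ∀ n N : ℕ, ∑ k ∈ Finset.range N, a (n + k) = A n - A (n + N) := by
    intro n N
    have h1 := Summable.sum_add_tsum_nat_add N (hsa_shift n) (f := fun m => a (n + m))
    have h2 : (∑' i, a (n + (i + N))) = A (n + N) := by
      exact tsum_congr (fun i => by congr 1; omega)
    rw [h2] at h1
    linarith
  -- summabilities for the two series
  have hsT1 : Summable (fun n => bt n * A n) :=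
    Summable.of_nonneg_of_le
      (fun n => mul_nonneg (hbt_nn n) (hA_nn n))
      (fun n => mul_le_mul_of_nonneg_left (hA_anti (Nat.zero_le n)) (hbt_nn n))
      (hbt_sum.mul_right (A 0))
  have hsT2 : ∀ N, Summable (fun n => bt n * A (n + N)) := by
    intro N
    refine Summable.of_nonneg_of_le
      (fun n => mul_nonneg (hbt_nn n) (hA_nn _))
      (fun n => mul_le_mul_of_nonneg_left (hA_anti (Nat.zero_le _)) (hbt_nn n))
      (hbt_sum.mul_right (A 0))
  -- S_N = T1 - T2 N
  have hSN : ∀ N, f 0 - f N = (∑' n, bt n * A n) - ∑' n, bt n * A (n + N) := by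
    intro N
    rw [htel N, ← Summable.tsum_finsetSum (fun k _ => hsb k)]
    have h1 : ∀ n : ℕ, ∑ k ∈ Finset.range N, bt n * a (n + k)
        = bt n * A n - bt n * A (n + N) := by
      intro n
      rw [← Finset.mul_sum, htail n N, mul_sub]
    calc ∑' n, ∑ k ∈ Finset.range N, bt n * a (n + k)
        = ∑' n, (bt n * A n - bt n * A (n + N)) := tsum_congr h1
      _ = (∑' n, bt n * A n) - ∑' n, bt n * A (n + N) := Summable.tsum_sub hsT1 (hsT2 N)
  -- T2 N → 0
  have hT2 : Tendsto (fun N => ∑' n, bt n * A (n + N)) atTop (nhds 0) := by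
    apply squeeze_zero
    · intro N
      exact tsum_nonneg (fun n => mul_nonneg (hbt_nn n) (hA_nn _))
    · intro N
      calc (∑' n, bt n * A (n + N)) ≤ ∑' n, bt n * A N := by
            apply Summable.tsum_le_tsum _ (hsT2 N) (hbt_sum.mul_right (A N))
            intro n
            exact mul_le_mul_of_nonneg_left (hA_anti (Nat.le_add_left N n)) (hbt_nn n)
        _ = (∑' n, bt n) * A N := tsum_mul_right
    · have := (tendsto_const_nhds (x := ∑' n, bt n) (f := atTop (α := ℕ))).mul hA_tendsto
      simpa using this
  -- f 0 - l = T1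
  have hfl : f 0 - l = ∑' n, bt n * A n := by
    have h1 : Tendsto (fun N => f 0 - f N) atTop (nhds (f 0 - l)) := by
      exact (tendsto_const_nhds).sub hl
    have h2 : Tendsto (fun N => f 0 - f N) atTop (nhds ((∑' n, bt n * A n) - 0)) := by
      have := (tendsto_const_nhds (x := ∑' n, bt n * A n) (f := atTop (α := ℕ))).sub hT2
      simpa only [← hSN] using this
    have := tendsto_nhds_unique h1 h2
    simpa using this
  -- Fubini: T1 = ∑ β m a m
  set F : ℕ → ℕ → ℝ := fun n m => if n ≤ m then bt n * a m else 0 with hF_def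
  have hF_nn : ∀ n m, 0 ≤ F n m := by
    intro n m
    by_cases hnm : n ≤ m <;>
      simp [hF_def, hnm, mul_nonneg (hbt_nn n) (ha_nn m)]
  have hF_le : ∀ n m, F n m ≤ bt n * a m := by
    intro n m
    by_cases hnm : n ≤ m <;>
      simp [hF_def, hnm, mul_nonneg (hbt_nn n) (ha_nn m)]
  have hF_unc : Summable (Function.uncurry F) :=
    Summable.of_nonneg_of_le (fun p => hF_nn p.1 p.2) (fun p => hF_le p.1 p.2)
      (hbt_sum.mul_of_nonneg hsum_a hbt_nn ha_nn)
  have hF_row : ∀ n, Summable (F n) := fun n =>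
    Summable.of_nonneg_of_le (hF_nn n) (hF_le n) (hsum_a.mul_left (bt n))
  have hF_col : ∀ m, Summable (fun n => F n m) := by
    intro m
    apply summable_of_ne_finset_zero (s := Finset.range (m + 1))
    intro n hn
    simp only [Finset.mem_range] at hn
    have hnm : ¬ n ≤ m := by omega
    simp [hF_def, hnm]
  have hrow : ∀ n, ∑' m, F n m = bt n * A n := by
    intro n
    have h1 := Summable.sum_add_tsum_nat_add n (hF_row n) (f := F n)
    have h2 : ∑ m ∈ Finset.range n, F n m = 0 := by
      apply Finset.sum_eq_zero
      intro m hm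
      simp only [Finset.mem_range] at hm
      have hnm : ¬ n ≤ m := by omega
      simp [hF_def, hnm]
    have h3 : (∑' m, F n (m + n)) = bt n * A n := by
      have heq : ∀ m : ℕ, F n (m + n) = bt n * a (n + m) := by
        intro m
        have hle : n ≤ m + n := Nat.le_add_left n m
        simp only [hF_def, if_pos hle]
        rw [Nat.add_comm m n]
      rw [tsum_congr heq, tsum_mul_left]
    rw [h2, h3, zero_add] at h1
    exact h1.symm
  have hcol : ∀ m, ∑' n, F n m = (∑ j ∈ Finset.range (m + 1), bt j) * a m := by
    intro m
    rw [tsum_eq_sum (s := Finset.range (m + 1))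
      (fun n hn => by
        simp only [Finset.mem_range] at hn
        have hnm : ¬ n ≤ m := by omega
        simp [hF_def, hnm])]
    rw [Finset.sum_mul]
    apply Finset.sum_congr rfl
    intro n hn
    simp only [Finset.mem_range] at hn
    have hnm : n ≤ m := by omega
    simp [hF_def, hnm]
  have hfub : (∑' n, bt n * A n)
      = ∑' m, (∑ j ∈ Finset.range (m + 1), bt j) * a m := by
    have hsw := Summable.tsum_comm' hF_unc hF_row hF_col
    calc (∑' n, bt n * A n) = ∑' n, ∑' m, F n m := (tsum_congr hrow).symm
      _ = ∑' m, ∑' n, F n m := hsw.symm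
      _ = ∑' m, (∑ j ∈ Finset.range (m + 1), bt j) * a m := tsum_congr hcol
  refine ⟨hsum_a, l, hl, ?_⟩
  have hB0 : ‖B h‖ ^ 2 = f 0 := by simp [hf_def]
  rw [hB0, ← hfub]
  linarith [hfl]
end

section
/- Let q(t) = q_0 + q_1 t + … + q_s t^s be a real polynomial all of whose roots lie in the open unit disc (so q_s ≠ 0, q(1) ≠ 0). Let a ∈ ℓ^∞ and define b_n := ∑_{j=0}^s q_j a_{n+j}. If b_n converges to b_∞, then a_n converges to b_∞ / q(1). -/
open Filter Finset Polynomial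

/-- The shift operator on complex sequences. -/
noncomputable def shiftOp : Module.End ℂ (ℕ → ℂ) where
  toFun a := fun n => a (n + 1)
  map_add' := by intros; rfl
  map_smul' := by intros; rfl

lemma shiftOp_pow (i : ℕ) (a : ℕ → ℂ) (n : ℕ) : ((shiftOp ^ i) a) n = a (n + i) := by
  induction i generalizing a n with
  | zero => rfl
  | succ k ih =>
    rw [pow_succ', Module.End.mul_apply]
    show ((shiftOp ^ k) a) (n + 1) = a (n + (k + 1))
    rw [ih a (n + 1)]
    ring_nf

lemma aeval_shiftOp (p : Polynomial ℂ) (a : ℕ → ℂ) (n : ℕ) :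
    ((aeval shiftOp p) a) n = ∑ j ∈ Finset.range (p.natDegree + 1), p.coeff j * a (n + j) := by
  rw [aeval_eq_sum_range]
  have h1 : ((∑ i ∈ Finset.range (p.natDegree + 1), p.coeff i • shiftOp ^ i) a) n
      = ∑ i ∈ Finset.range (p.natDegree + 1), (p.coeff i • (shiftOp ^ i) a) n := by
    rw [LinearMap.sum_apply]
    exact Finset.sum_apply n _ _
  rw [h1]
  refine Finset.sum_congr rfl fun i _ => ?_
  simp [shiftOp_pow, Pi.smul_apply, smul_eq_mul]

/-- One-step lemma: if `c (n+1) - λ * c n → L` with `‖λ‖ < 1`, then `c → L / (1 - λ)`. -/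
lemma one_step (lam : ℂ) (hlam : ‖lam‖ < 1) (c : ℕ → ℂ) (L : ℂ)
    (h : Tendsto (fun n => c (n + 1) - lam * c n) atTop (nhds L)) :
    Tendsto c atTop (nhds (L / (1 - lam))) := by
  have h1lam : (1 : ℂ) - lam ≠ 0 := by
    intro h0
    have : lam = 1 := by linear_combination -h0
    rw [this] at hlam; simp at hlam
  set e : ℕ → ℂ := fun n => c n - L / (1 - lam) with he
  set d : ℕ → ℂ := fun n => c (n + 1) - lam * c n with hd
  have hrec : ∀ n, e (n + 1) = lam * e n + (d n - L) := by
    intro n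
    simp only [he, hd]
    field_simp
    ring
  have hd0 : Tendsto (fun n => d n - L) atTop (nhds 0) := by
    simpa using h.sub_const L
  -- show e → 0
  have he0 : Tendsto e atTop (nhds 0) := by
    set r := ‖lam‖ with hr
    have hr0 : 0 ≤ r := norm_nonneg _
    have hr1 : 1 - r > 0 := by linarith
    -- key induction
    have key : ∀ δ : ℝ, 0 ≤ δ → ∀ N : ℕ, (∀ j, N ≤ j → ‖d j - L‖ ≤ δ) →
        ∀ k : ℕ, ‖e (N + k)‖ ≤ r ^ k * ‖e N‖ + δ / (1 - r) := by
      intro δ hδ N hN k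
      induction k with
      | zero => simp; positivity
      | succ k ih =>
        have h1 : e (N + (k + 1)) = lam * e (N + k) + (d (N + k) - L) := by
          have := hrec (N + k); rw [← this]; ring_nf
        calc ‖e (N + (k + 1))‖ = ‖lam * e (N + k) + (d (N + k) - L)‖ := by rw [h1]
          _ ≤ ‖lam * e (N + k)‖ + ‖d (N + k) - L‖ := norm_add_le _ _
          _ = r * ‖e (N + k)‖ + ‖d (N + k) - L‖ := by rw [norm_mul]
          _ ≤ r * (r ^ k * ‖e N‖ + δ / (1 - r)) + δ := by
              have h2 := hN (N + k) (Nat.le_add_right _ _)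
              have h3 : r * ‖e (N + k)‖ ≤ r * (r ^ k * ‖e N‖ + δ / (1 - r)) :=
                mul_le_mul_of_nonneg_left ih hr0
              linarith
          _ ≤ r ^ (k + 1) * ‖e N‖ + δ / (1 - r) := by
              have : r * (δ / (1 - r)) + δ ≤ δ / (1 - r) := by
                have heq : r * (δ / (1 - r)) + δ = δ / (1 - r) := by
                  field_simp
                  ring
                linarith
              rw [pow_succ]
              nlinarith [pow_nonneg hr0 k, norm_nonneg (e N)]
    rw [Metric.tendsto_atTop]
    intro ε hε
    set δ := ε * (1 - r) / 3 with hδdef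
    have hδpos : 0 < δ := by positivity
    have hδ' : δ / (1 - r) = ε / 3 := by
      rw [hδdef]; field_simp
    obtain ⟨N, hN⟩ := (Metric.tendsto_atTop.mp hd0) δ hδpos
    have hN' : ∀ j, N ≤ j → ‖d j - L‖ ≤ δ := fun j hj => by
      have := hN j hj
      rw [dist_eq_norm, sub_zero] at this
      exact le_of_lt this
    have hkey := key δ (le_of_lt hδpos) N hN'
    -- r^k * ‖e N‖ → 0
    have hgeo : Tendsto (fun k : ℕ => r ^ k * ‖e N‖) atTop (nhds 0) := by
      simpa using (tendsto_pow_atTop_nhds_zero_of_lt_one hr0 hlam).mul_const ‖e N‖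
    obtain ⟨K, hK⟩ := (Metric.tendsto_atTop.mp hgeo) (ε / 3) (by positivity)
    refine ⟨N + K, fun n hn => ?_⟩
    have hnN : N ≤ n := le_trans (Nat.le_add_right _ _) hn
    have hk : n = N + (n - N) := by omega
    have hKk : K ≤ n - N := by omega
    have h1 : ‖e n‖ ≤ r ^ (n - N) * ‖e N‖ + δ / (1 - r) := by
      have h1' := hkey (n - N)
      rw [← hk] at h1'
      exact h1'
    have h2 := hK (n - N) hKk
    rw [dist_eq_norm, sub_zero] at h2
    have h3 : r ^ (n - N) * ‖e N‖ ≤ |r ^ (n - N) * ‖e N‖| := le_abs_self _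
    rw [Real.norm_eq_abs] at h2
    rw [dist_eq_norm, sub_zero, hδ'] at *
    calc ‖e n‖ ≤ r ^ (n - N) * ‖e N‖ + ε / 3 := by rw [← hδ']; exact h1
      _ < ε / 3 + ε / 3 + ε / 3 := by
          have := lt_of_le_of_lt h3 h2
          linarith [hε]
      _ = ε := by ring
  have : c = fun n => e n + L / (1 - lam) := by
    funext n; simp [he]
  rw [this]
  have h2 := he0.add_const (L / (1 - lam))
  simp only [zero_add] at h2
  exact h2

/-- Main complex lemma, by induction on degree. -/
lemma keyC (N : ℕ) : ∀ (p : Polynomial ℂ), p.natDegree ≤ N → p ≠ 0 →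
    (∀ z : ℂ, p.IsRoot z → ‖z‖ < 1) → ∀ (a : ℕ → ℂ) (L : ℂ),
    Tendsto ((aeval shiftOp p) a) atTop (nhds L) →
    Tendsto a atTop (nhds (L / p.eval 1)) := by
  induction N with
  | zero =>
    intro p hdeg hp0 _ a L h
    have hd0 : p.natDegree = 0 := Nat.le_zero.mp hdeg
    have hc : p.coeff 0 ≠ 0 := by
      intro h0
      exact hp0 (Polynomial.eq_C_of_natDegree_eq_zero hd0 ▸ (by rw [h0, map_zero]))
    have heval : p.eval 1 = p.coeff 0 := by
      conv_lhs => rw [Polynomial.eq_C_of_natDegree_eq_zero hd0]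
      simp
    have hfun : ∀ n, ((aeval shiftOp p) a) n = p.coeff 0 * a n := by
      intro n
      rw [aeval_shiftOp, hd0]
      simp
    have h' : Tendsto (fun n => p.coeff 0 * a n) atTop (nhds L) := by
      refine h.congr fun n => (hfun n)
    have := h'.div_const (p.coeff 0)
    rw [heval]
    refine this.congr fun n => ?_
    field_simp
  | succ N ih =>
    intro p hdeg hp0 hroots a L h
    by_cases hd0 : p.natDegree = 0
    · -- same as base case
      have hc : p.coeff 0 ≠ 0 := by
        intro h0
        exact hp0 (Polynomial.eq_C_of_natDegree_eq_zero hd0 ▸ (by rw [h0, map_zero]))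
      have heval : p.eval 1 = p.coeff 0 := by
        conv_lhs => rw [Polynomial.eq_C_of_natDegree_eq_zero hd0]
        simp
      have hfun : ∀ n, ((aeval shiftOp p) a) n = p.coeff 0 * a n := by
        intro n
        rw [aeval_shiftOp, hd0]
        simp
      have h' : Tendsto (fun n => p.coeff 0 * a n) atTop (nhds L) :=
        h.congr fun n => hfun n
      have := h'.div_const (p.coeff 0)
      rw [heval]
      refine this.congr fun n => ?_
      field_simp
    · have hdpos : 0 < p.degree := by
        rw [← Polynomial.natDegree_pos_iff_degree_pos]
        omega
      obtain ⟨lam, hroot⟩ := Complex.exists_root hdpos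
      have hlam : ‖lam‖ < 1 := hroots lam hroot
      obtain ⟨p', hp'⟩ := (Polynomial.dvd_iff_isRoot.mpr hroot)
      have hXlam : (X - C lam : Polynomial ℂ) ≠ 0 := Polynomial.X_sub_C_ne_zero lam
      have hp'0 : p' ≠ 0 := by
        intro h0; rw [h0, mul_zero] at hp'; exact hp0 hp'
      have hdeg' : p'.natDegree ≤ N := by
        have := Polynomial.natDegree_mul hXlam hp'0
        rw [← hp'] at this
        rw [Polynomial.natDegree_X_sub_C] at this
        omega
      have hroots' : ∀ z : ℂ, p'.IsRoot z → ‖z‖ < 1 := by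
        intro z hz
        apply hroots
        rw [Polynomial.IsRoot, hp', Polynomial.eval_mul, hz.eq_zero, mul_zero]
      set c : ℕ → ℂ := (aeval shiftOp p') a with hc
      have hcomp : (aeval shiftOp p) a = (aeval shiftOp (X - C lam)) c := by
        rw [hp', map_mul, Module.End.mul_apply]
      have hstep : ∀ n, ((aeval shiftOp (X - C lam)) c) n = c (n + 1) - lam * c n := by
        intro n
        rw [map_sub, aeval_X, aeval_C]
        simp only [LinearMap.sub_apply, Pi.sub_apply]
        have h1 : (shiftOp c) n = c (n + 1) := rfl
        have h2 : ((algebraMap ℂ (Module.End ℂ (ℕ → ℂ))) lam c) n = lam * c n := by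
          simp [Algebra.algebraMap_eq_smul_one]
        rw [h1, h2]
      have hc' : Tendsto (fun n => c (n + 1) - lam * c n) atTop (nhds L) := by
        refine h.congr fun n => ?_
        rw [hcomp, hstep]
      have hctend : Tendsto c atTop (nhds (L / (1 - lam))) := one_step lam hlam c L hc'
      have := ih p' hdeg' hp'0 hroots' a (L / (1 - lam)) hctend
      have heval : p.eval 1 = (1 - lam) * p'.eval 1 := by
        rw [hp', Polynomial.eval_mul]
        simp
      rw [heval, ← div_div]
      exact this

theorem stmt17 (q : Polynomial ℝ) (hq : q ≠ 0)
    (hroots : ∀ z : ℂ, (q.map (algebraMap ℝ ℂ)).IsRoot z → ‖z‖ < 1)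
    (a : ℕ → ℝ) (Mb : ℝ) (hab : ∀ n, |a n| ≤ Mb)
    (b_inf : ℝ)
    (hb : Tendsto (fun n => ∑ j ∈ Finset.range (q.natDegree + 1), q.coeff j * a (n + j))
      atTop (nhds b_inf)) :
    Tendsto a atTop (nhds (b_inf / q.eval 1)) := by
  set p : Polynomial ℂ := q.map (algebraMap ℝ ℂ) with hpdef
  have hp0 : p ≠ 0 := Polynomial.map_ne_zero hq
  have hdegeq : p.natDegree = q.natDegree := Polynomial.natDegree_map _
  set A : ℕ → ℂ := fun n => (a n : ℂ) with hA
  have hfun : ∀ n, ((aeval shiftOp p) A) n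
      = ((∑ j ∈ Finset.range (q.natDegree + 1), q.coeff j * a (n + j) : ℝ) : ℂ) := by
    intro n
    rw [aeval_shiftOp, hdegeq]
    push_cast
    refine Finset.sum_congr rfl fun j _ => ?_
    rw [hpdef, Polynomial.coeff_map]
    rfl
  have hbC : Tendsto ((aeval shiftOp p) A) atTop (nhds ((b_inf : ℝ) : ℂ)) := by
    have := (Complex.continuous_ofReal.tendsto b_inf).comp hb
    refine this.congr fun n => (hfun n).symm
  have hkey := keyC p.natDegree p le_rfl hp0 hroots A (b_inf : ℂ) hbC
  have heval : p.eval 1 = ((q.eval 1 : ℝ) : ℂ) := by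
    rw [hpdef, Polynomial.eval_one_map]
    rfl
  rw [heval, ← Complex.ofReal_div] at hkey
  exact_mod_cast Complex.isometry_ofReal.isEmbedding.tendsto_nhds_iff.mpr hkey
end

section
/- Let q be a real polynomial with all roots in the open unit disc and Q(t) = (1-t)q(t). Let a ∈ ℓ^∞ be real. If b_n := ∑_j Q_j a_{n+j} satisfies b_n ≥ 0 for all n, then lim_{n→∞} a_n exists. -/
open Filter Finset Polynomial
open Filter Finset Polynomial

noncomputable def shiftE (K : Type*) [CommRing K] : Module.End K (ℕ → K) where
  toFun a := fun n => a (n+1)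
  map_add' := by intros; rfl
  map_smul' := by intros; rfl

lemma shiftE_pow {K : Type*} [CommRing K] (j : ℕ) (a : ℕ → K) (n : ℕ) :
    ((shiftE K ^ j) a) n = a (n + j) := by
  induction j generalizing a n with
  | zero => rfl
  | succ j ih =>
    rw [pow_succ', Module.End.mul_apply]
    show ((shiftE K ^ j) a) (n+1) = _
    rw [ih]; ring_nf

lemma aeval_shift {K : Type*} [CommRing K] (p : K[X]) (N : ℕ) (hN : p.natDegree < N)
    (a : ℕ → K) (n : ℕ) :
    ((aeval (shiftE K) p) a) n = ∑ j ∈ Finset.range N, p.coeff j * a (n + j) := by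
  conv_lhs => rw [p.as_sum_range' N hN]
  rw [map_sum]
  rw [LinearMap.sum_apply]
  rw [Finset.sum_apply]
  refine Finset.sum_congr rfl fun j hj => ?_
  rw [aeval_monomial, Module.End.mul_apply, Module.algebraMap_end_apply,
    Pi.smul_apply, shiftE_pow, smul_eq_mul]
open Filter Finset Polynomial

lemma contraction (r : ℂ) (hr : ‖r‖ < 1) (d : ℕ → ℂ) (K : ℝ) (hd : ∀ n, ‖d n‖ ≤ K)
    (c : ℂ) (h : Tendsto (fun n => d (n+1) - r * d n) atTop (nhds c)) :
    Tendsto d atTop (nhds (c / (1 - r))) := by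
  have hr1 : r ≠ 1 := by intro h; rw [h] at hr; simp at hr
  have h1r : (1 : ℂ) - r ≠ 0 := sub_ne_zero.mpr (Ne.symm hr1)
  set l : ℂ := c / (1 - r) with hl
  set e : ℕ → ℂ := fun n => d n - l with he
  set ε : ℕ → ℂ := fun n => d (n+1) - r * d n - c with hε
  have hεt : Tendsto ε atTop (nhds 0) := by
    have := h.sub_const c
    simpa using this
  have hrec : ∀ n, e (n+1) = r * e n + ε n := by
    intro n
    have hthis : r * l + c = l := by
      rw [hl]; field_simp; ring
    simp only [he, hε]
    linear_combination hthis
  set E : ℝ := K + ‖l‖ with hE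
  have hEe : ∀ n, ‖e n‖ ≤ E := fun n => (norm_sub_le _ _).trans (add_le_add_left (hd n) _)
  have hE0 : 0 ≤ E := le_trans (norm_nonneg _) (hEe 0)
  set ρ : ℝ := ‖r‖ with hρ
  have hρ0 : 0 ≤ ρ := norm_nonneg _
  have he0 : Tendsto e atTop (nhds 0) := by
    rw [Metric.tendsto_atTop]
    intro δ hδ
    have hδ2 : 0 < δ * (1 - ρ) / 2 := div_pos (mul_pos hδ (by linarith)) two_pos
    obtain ⟨n₀, hn₀⟩ := (Metric.tendsto_atTop.mp hεt) (δ * (1 - ρ) / 2) hδ2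
    have key : ∀ m, ‖e (n₀ + m)‖ ≤ ρ^m * E + δ/2 := by
      intro m
      induction m with
      | zero => simpa using le_add_of_le_of_nonneg (hEe n₀) (by positivity)
      | succ m ih =>
        have hεb : ‖ε (n₀ + m)‖ ≤ δ * (1 - ρ) / 2 := by
          have := hn₀ (n₀ + m) (Nat.le_add_right _ _)
          rw [dist_zero_right] at this
          exact this.le
        have : e (n₀ + (m+1)) = r * e (n₀ + m) + ε (n₀ + m) := by
          rw [← hrec]; ring_nf
        rw [this]
        calc ‖r * e (n₀ + m) + ε (n₀ + m)‖ ≤ ‖r * e (n₀ + m)‖ + ‖ε (n₀ + m)‖ := norm_add_le _ _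
          _ = ρ * ‖e (n₀ + m)‖ + ‖ε (n₀ + m)‖ := by rw [norm_mul]
          _ ≤ ρ * (ρ^m * E + δ/2) + δ * (1 - ρ) / 2 := add_le_add (mul_le_mul_of_nonneg_left ih hρ0) hεb
          _ = ρ^(m+1) * E + δ/2 := by ring
    have : Tendsto (fun m => ρ^m * E) atTop (nhds 0) := by
      simpa using (tendsto_pow_atTop_nhds_zero_of_lt_one hρ0 hr).mul_const E
    obtain ⟨m₀, hm₀⟩ := (Metric.tendsto_atTop.mp this) (δ/2) (by positivity)
    refine ⟨n₀ + m₀, fun n hn => ?_⟩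
    have hmm : m₀ ≤ n - n₀ := by omega
    have hne : n = n₀ + (n - n₀) := by omega
    rw [dist_zero_right, hne]
    calc ‖e (n₀ + (n - n₀))‖ ≤ ρ^(n - n₀) * E + δ/2 := key _
      _ ≤ ρ^m₀ * E + δ/2 :=
          add_le_add_left (mul_le_mul_of_nonneg_right (pow_le_pow_of_le_one hρ0 hr.le hmm) hE0) _
      _ < δ/2 + δ/2 := by
          have := hm₀ m₀ le_rfl
          rw [dist_zero_right, Real.norm_eq_abs, abs_of_nonneg (by positivity)] at this
          linarith
      _ = δ := by ring
  have : Tendsto (fun n => e n + l) atTop (nhds (0 + l)) := he0.add_const l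
  simpa [he] using this


lemma bound_aeval {K : Type*} [NormedCommRing K] (p : K[X]) (a : ℕ → K) (M : ℝ)
    (ha : ∀ n, ‖a n‖ ≤ M) (hM : 0 ≤ M) :
    ∀ n, ‖(aeval (shiftE K) p) a n‖ ≤ (∑ j ∈ Finset.range (p.natDegree + 1), ‖p.coeff j‖) * M := by
  intro n
  rw [aeval_shift p (p.natDegree + 1) (Nat.lt_succ_self _), Finset.sum_mul]
  refine (norm_sum_le _ _).trans (Finset.sum_le_sum fun j _ => ?_)
  exact (norm_mul_le _ _).trans (mul_le_mul (le_refl _) (ha _) (norm_nonneg _) (norm_nonneg _))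

lemma key : ∀ (N : ℕ) (p : ℂ[X]), p.natDegree ≤ N → p ≠ 0 →
    (∀ z, p.IsRoot z → ‖z‖ < 1) →
    ∀ (a : ℕ → ℂ) (M : ℝ), (∀ n, ‖a n‖ ≤ M) →
    ∀ (c : ℂ), Tendsto (fun n => (aeval (shiftE ℂ) p) a n) atTop (nhds c) →
    Tendsto a atTop (nhds (c / p.eval 1)) := by
  intro N
  induction N with
  | zero =>
    intro p hdeg hp _ a M ha c hc
    obtain ⟨k, rfl⟩ := Polynomial.natDegree_eq_zero.mp (Nat.le_zero.mp hdeg)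
    have hk : k ≠ 0 := by simpa using hp
    have heq : ∀ n, (aeval (shiftE ℂ) (C k)) a n = k * a n := by
      intro n
      rw [aeval_C, Module.algebraMap_end_apply, Pi.smul_apply, smul_eq_mul]
    simp only [heq] at hc
    have := hc.const_mul k⁻¹
    simp only [← mul_assoc, inv_mul_cancel₀ hk, one_mul] at this
    simpa [eval_C, div_eq_inv_mul] using this
  | succ N ih =>
    intro p hdeg hp hroots a M ha c hc
    by_cases hd0 : p.natDegree ≤ N
    · exact ih p hd0 hp hroots a M ha c hc
    have hdpos : 0 < p.degree := by
      rw [Polynomial.natDegree_pos_iff_degree_pos.symm] at *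
      omega
    obtain ⟨r, hr⟩ := Complex.exists_root hdpos
    have hfac : (X - C r) * (p / (X - C r)) = p := (mul_div_eq_iff_isRoot).mpr hr
    set p' : ℂ[X] := p / (X - C r) with hp'
    have hXr : (X - C r : ℂ[X]) ≠ 0 := X_sub_C_ne_zero r
    have hp'0 : p' ≠ 0 := by
      intro h; rw [h, mul_zero] at hfac; exact hp hfac.symm
    have hdeg' : p'.natDegree ≤ N := by
      have := Polynomial.natDegree_mul hXr hp'0
      rw [hfac, natDegree_X_sub_C] at this
      omega
    have hroots' : ∀ z, p'.IsRoot z → ‖z‖ < 1 := by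
      intro z hz
      apply hroots
      rw [← hfac]
      simp [IsRoot, hz.eq_zero]
    have hrn : ‖r‖ < 1 := hroots r hr
    set d : ℕ → ℂ := (aeval (shiftE ℂ) p') a with hdd
    have hMd : ∀ n, ‖d n‖ ≤ (∑ j ∈ Finset.range (p'.natDegree + 1), ‖p'.coeff j‖) * (max M 0) :=
      bound_aeval p' a (max M 0) (fun n => (ha n).trans (le_max_left _ _)) (le_max_right _ _)
    have hhc : Tendsto (fun n => d (n+1) - r * d n) atTop (nhds c) := by
      have heq : ∀ n, (aeval (shiftE ℂ) p) a n = d (n+1) - r * d n := by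
        intro n
        conv_lhs => rw [← hfac]
        rw [map_mul, Module.End.mul_apply]
        rw [map_sub, aeval_X, aeval_C]
        rw [LinearMap.sub_apply, Pi.sub_apply, Module.algebraMap_end_apply, Pi.smul_apply,
          smul_eq_mul]
        rfl
      simpa only [heq] using hc
    have hd : Tendsto d atTop (nhds (c / (1 - r))) := contraction r hrn d _ hMd c hhc
    have := ih p' hdeg' hp'0 hroots' a M ha (c / (1 - r)) hd
    have heval : p.eval 1 = (1 - r) * p'.eval 1 := by
      rw [← hfac, eval_mul, eval_sub, eval_X, eval_C]
    rw [heval, ← div_div]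
    exact this

theorem stmt18 (q : Polynomial ℝ) (hq : q ≠ 0)
    (hroots : ∀ z : ℂ, (q.map (algebraMap ℝ ℂ)).IsRoot z → ‖z‖ < 1)
    (a : ℕ → ℝ) (Mb : ℝ) (hab : ∀ n, |a n| ≤ Mb)
    (hb : ∀ n : ℕ, 0 ≤ ∑ j ∈ Finset.range (((1 - X) * q).natDegree + 1),
      ((1 - X) * q).coeff j * a (n + j)) :
    ∃ l : ℝ, Tendsto a atTop (nhds l) := by
  set c : ℕ → ℝ := (aeval (shiftE ℝ) q) a with hc
  have hQ : (1 - X : ℝ[X]) * q ≠ 0 :=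
    mul_ne_zero (by
      intro h
      have h2 := congrArg (fun p => Polynomial.coeff p 1) h
      simp [Polynomial.coeff_sub, Polynomial.coeff_one, Polynomial.coeff_X_one] at h2) hq
  have hb' : ∀ n, 0 ≤ c n - c (n + 1) := by
    intro n
    have h1 := hb n
    rw [← aeval_shift ((1 - X) * q) _ (Nat.lt_succ_self _) a n] at h1
    rw [map_mul, Module.End.mul_apply, map_sub, map_one, aeval_X,
      LinearMap.sub_apply, Pi.sub_apply, Module.End.one_apply] at h1
    exact h1
  have hmono : Antitone c := antitone_nat_of_succ_le (fun n => by linarith [hb' n])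
  have hcb : ∀ n, ‖c n‖ ≤ (∑ j ∈ Finset.range (q.natDegree + 1), ‖q.coeff j‖) * (max Mb 0) :=
    bound_aeval q a (max Mb 0)
      (fun n => (by simpa using hab n : ‖a n‖ ≤ Mb).trans (le_max_left _ _)) (le_max_right _ _)
  have hbdd : BddBelow (Set.range c) := by
    refine ⟨-((∑ j ∈ Finset.range (q.natDegree + 1), ‖q.coeff j‖) * (max Mb 0)), ?_⟩
    rintro x ⟨n, rfl⟩
    have := (abs_le.mp (by simpa [Real.norm_eq_abs] using hcb n)).1
    exact this
  have hL : Tendsto c atTop (nhds (⨅ n, c n)) := tendsto_atTop_ciInf hmono hbdd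
  set L : ℝ := ⨅ n, c n
  -- complexify
  set qc : ℂ[X] := q.map (algebraMap ℝ ℂ) with hqc
  have hinj : Function.Injective (algebraMap ℝ ℂ) := (algebraMap ℝ ℂ).injective
  have hqc0 : qc ≠ 0 := (Polynomial.map_ne_zero_iff hinj).mpr hq
  have hdegqc : qc.natDegree = q.natDegree := q.natDegree_map_eq_of_injective hinj
  set ac : ℕ → ℂ := fun n => (a n : ℂ) with hac
  have hconn : ∀ n, (aeval (shiftE ℂ) qc) ac n = (c n : ℂ) := by
    intro n
    rw [aeval_shift qc (q.natDegree + 1) (by omega) ac n,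
      hc, aeval_shift q (q.natDegree + 1) (Nat.lt_succ_self _) a n]
    push_cast
    refine Finset.sum_congr rfl fun j _ => ?_
    rw [hqc, Polynomial.coeff_map]
    rfl
  have hcL : Tendsto (fun n => (aeval (shiftE ℂ) qc) ac n) atTop (nhds (L : ℂ)) := by
    simp only [hconn]
    exact (Complex.continuous_ofReal.tendsto L).comp hL
  have hacb : ∀ n, ‖ac n‖ ≤ Mb := fun n => by simpa [hac] using hab n
  have hmain := key qc.natDegree qc le_rfl hqc0 hroots ac Mb hacb (L : ℂ) hcL
  refine ⟨((L : ℂ) / qc.eval 1).re, ?_⟩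
  have : a = fun n => (ac n).re := by funext n; simp [hac]
  rw [this]
  exact (Complex.continuous_re.tendsto _).comp hmain
end
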